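/- arXiv:2501.01574 — 3 statements merged into one kernel-verified Lean document; each statement's English description precedes it below -/
import Mathlib

section
/- Let x and y be two points (not necessarily distinct) such that E[N(x)²] < ∞ and E[N(y)²] < ∞. Then h(x)h(y) is integrable and E[h(x) h(y)] = E[N(x,y)], i.e. the covariance of the heights at x and y equals the expected number of loops surrounding both x and y. -/
open MeasureTheory ProbabilityTheory

/-- The finite sets of loops (`Finset Γ`) carry the discrete (`⊤`) sigma-algebra. -/
instance (priority := low) loopSigmaAlgebra (Γ : Type*) : MeasurableSpace (Finset Γ) := ⊤

instance loopSingletonClass (Γ : Type*) : @MeasurableSingletonClass (Finset Γ) (loopSigmaAlgebra Γ) :=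
  @MeasurableSingletonClass.mk (Finset Γ) (loopSigmaAlgebra Γ) (fun _ => MeasurableSpace.measurableSet_top)

/-- In the loop-sign model, if `E[N(x)²] < ∞` and `E[N(y)²] < ∞`, then the
product of heights `h(x) h(y)` is integrable and `E[h(x) h(y)] = E[N(x,y)]`, where
`N(x,y) = |S x ∩ S y|` is the number of loops surrounding both `x` and `y`. -/
theorem loopSign_height_covariance
    {Ω : Type*} [MeasurableSpace Ω] (μ : Measure Ω) [IsProbabilityMeasure μ]
    {Γ : Type*} [Countable Γ] [DecidableEq Γ] {X : Type*}
    (S : X → Ω → Finset Γ) (s : Γ → Ω → ℝ)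
    (hSmeas : ∀ x : X, Measurable (S x))
    (hsmeas : ∀ γ : Γ, Measurable (s γ))
    (hsign : ∀ γ : Γ, μ {ω | s γ ω = 1} = 1/2 ∧ μ {ω | s γ ω = -1} = 1/2)
    (hsindep : iIndepFun s μ)
    (hSsindep : IndepFun (fun ω (x : X) => S x ω) (fun ω (γ : Γ) => s γ ω) μ)
    (x y : X)
    (hx : Integrable (fun ω => ((S x ω).card : ℝ) ^ 2) μ)
    (hy : Integrable (fun ω => ((S y ω).card : ℝ) ^ 2) μ) :
    Integrable (fun ω => (∑ γ ∈ S x ω, s γ ω) * (∑ γ ∈ S y ω, s γ ω)) μ ∧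
      ∫ ω, (∑ γ ∈ S x ω, s γ ω) * (∑ γ ∈ S y ω, s γ ω) ∂μ
        = ∫ ω, ((S x ω ∩ S y ω).card : ℝ) ∂μ := by
  classical
  -- almost surely every sign is ±1
  have hae : ∀ᵐ ω ∂μ, ∀ γ : Γ, s γ ω = 1 ∨ s γ ω = -1 := by
    rw [ae_all_iff]
    intro γ
    have hP : MeasurableSet {ω | s γ ω = 1} := hsmeas γ (measurableSet_singleton 1)
    have hQ : MeasurableSet {ω | s γ ω = -1} := hsmeas γ (measurableSet_singleton (-1))
    have hd : Disjoint {ω | s γ ω = 1} {ω | s γ ω = -1} := by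
      rw [Set.disjoint_left]
      intro ω h1 h2
      simp only [Set.mem_setOf_eq] at h1 h2
      norm_num [h1] at h2
    have hu : μ ({ω | s γ ω = 1} ∪ {ω | s γ ω = -1}) = 1 := by
      rw [measure_union hd hQ, (hsign γ).1, (hsign γ).2]
      rw [ENNReal.div_add_div_same, one_add_one_eq_two]
      exact ENNReal.div_self two_ne_zero ENNReal.ofNat_ne_top
    have hc : μ ({ω | s γ ω = 1} ∪ {ω | s γ ω = -1})ᶜ = 0 :=
      (prob_compl_eq_zero_iff (hP.union hQ)).mpr hu
    refine measure_mono_null ?_ hc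
    intro ω hω
    simp only [Set.mem_compl_iff, Set.mem_union, Set.mem_setOf_eq]
    intro h
    exact hω h
  -- integrability of individual signs and products of two signs
  have hsint : ∀ γ : Γ, Integrable (s γ) μ := by
    intro γ
    refine Integrable.mono' (integrable_const (1 : ℝ)) (hsmeas γ).aestronglyMeasurable ?_
    filter_upwards [hae] with ω h
    rcases h γ with h1 | h1 <;> simp [h1]
  have hmulint : ∀ γ δ : Γ, Integrable (fun ω => s γ ω * s δ ω) μ := by
    intro γ δ
    refine Integrable.mono' (integrable_const (1 : ℝ))
      ((hsmeas γ).mul (hsmeas δ)).aestronglyMeasurable ?_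
    filter_upwards [hae] with ω h
    rcases h γ with h1 | h1 <;> rcases h δ with h2 | h2 <;> simp [h1, h2]
  -- expectation of a single sign is zero
  have hszero : ∀ γ : Γ, ∫ ω, s γ ω ∂μ = 0 := by
    intro γ
    have hP : MeasurableSet {ω | s γ ω = 1} := hsmeas γ (measurableSet_singleton 1)
    have hQ : MeasurableSet {ω | s γ ω = -1} := hsmeas γ (measurableSet_singleton (-1))
    have heq : (fun ω => s γ ω) =ᵐ[μ]
        fun ω => Set.indicator {ω | s γ ω = 1} (fun _ => (1 : ℝ)) ω
          + Set.indicator {ω | s γ ω = -1} (fun _ => (-1 : ℝ)) ω := by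
      filter_upwards [hae] with ω h
      rcases h γ with h1 | h1 <;>
        · simp only [Set.indicator_apply, Set.mem_setOf_eq, h1]
          norm_num
    rw [integral_congr_ae heq, integral_add, integral_indicator_const _ hP,
      integral_indicator_const _ hQ, measureReal_def, measureReal_def, (hsign γ).1, (hsign γ).2]
    · norm_num [ENNReal.toReal_div]
    · exact (integrable_const (1 : ℝ)).indicator hP
    · exact (integrable_const (-1 : ℝ)).indicator hQ
  -- expectation of a product of two signs
  have hmul : ∀ γ δ : Γ, ∫ ω, s γ ω * s δ ω ∂μ = if γ = δ then 1 else 0 := by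
    intro γ δ
    by_cases h : γ = δ
    · subst h
      simp only [if_pos rfl]
      have heq : (fun ω => s γ ω * s γ ω) =ᵐ[μ] fun _ => (1 : ℝ) := by
        filter_upwards [hae] with ω hω
        rcases hω γ with h1 | h1 <;> simp [h1]
      rw [integral_congr_ae heq]
      simp
    · simp only [if_neg h]
      have hind : IndepFun (s γ) (s δ) μ := hsindep.indepFun h
      have h0 : integral μ (s γ * s δ) = 0 := by
        rw [hind.integral_mul_eq_mul_integral (hsint γ).aestronglyMeasurable (hsint δ).aestronglyMeasurable, hszero γ, hszero δ, mul_zero]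
      exact h0
  -- measurability of heights
  have hhm : ∀ z : X, Measurable (fun ω => ∑ γ ∈ S z ω, s γ ω) := by
    intro z
    have h1 : Measurable (fun p : Ω × Finset Γ => ∑ γ ∈ p.2, s γ p.1) :=
      measurable_from_prod_countable_left fun F =>
        Finset.measurable_sum F fun γ _ => hsmeas γ
    exact h1.comp (measurable_id.prodMk (hSmeas z))
  -- measurability of the intersection-card function
  have hgm : Measurable (fun ω => ((S x ω ∩ S y ω).card : ℝ)) := by
    have h1 : Measurable (fun p : Ω × Finset Γ => ((S x p.1 ∩ p.2).card : ℝ)) :=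
      measurable_from_prod_countable_left fun G =>
        (Measurable.of_discrete (f := fun F : Finset Γ => ((F ∩ G).card : ℝ))).comp (hSmeas x)
    have h2 : Measurable ((fun p : Ω × Finset Γ => ((S x p.1 ∩ p.2).card : ℝ))
        ∘ (fun ω => (ω, S y ω))) := h1.comp (measurable_id.prodMk (hSmeas y))
    exact h2
  -- integrability of the product of heights
  have hbound : ∀ᵐ ω ∂μ, ‖(∑ γ ∈ S x ω, s γ ω) * (∑ γ ∈ S y ω, s γ ω)‖
      ≤ (((S x ω).card : ℝ) ^ 2 + ((S y ω).card : ℝ) ^ 2) / 2 := by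
    filter_upwards [hae] with ω h
    have b : ∀ z : X, |∑ γ ∈ S z ω, s γ ω| ≤ ((S z ω).card : ℝ) := by
      intro z
      calc |∑ γ ∈ S z ω, s γ ω| ≤ ∑ γ ∈ S z ω, |s γ ω| :=
            Finset.abs_sum_le_sum_abs _ _
        _ = ∑ _γ ∈ S z ω, (1 : ℝ) :=
            Finset.sum_congr rfl fun γ _ => by rcases h γ with h1 | h1 <;> simp [h1]
        _ = ((S z ω).card : ℝ) := by simp
    rw [Real.norm_eq_abs, abs_mul]
    have h1 : |∑ γ ∈ S x ω, s γ ω| * |∑ γ ∈ S y ω, s γ ω|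
        ≤ ((S x ω).card : ℝ) * ((S y ω).card : ℝ) :=
      mul_le_mul (b x) (b y) (abs_nonneg _) (Nat.cast_nonneg _)
    nlinarith [sq_nonneg (((S x ω).card : ℝ) - ((S y ω).card : ℝ))]
  have hint : Integrable (fun ω => (∑ γ ∈ S x ω, s γ ω) * (∑ γ ∈ S y ω, s γ ω)) μ :=
    Integrable.mono' ((hx.add hy).div_const 2)
      ((hhm x).mul (hhm y)).aestronglyMeasurable hbound
  -- integrability of the intersection-card function
  have hgint : Integrable (fun ω => ((S x ω ∩ S y ω).card : ℝ)) μ := by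
    refine Integrable.mono' hx hgm.aestronglyMeasurable ?_
    filter_upwards with ω
    rw [Real.norm_eq_abs, abs_of_nonneg (by positivity)]
    have h1 : ((S x ω ∩ S y ω).card : ℝ) ≤ ((S x ω).card : ℝ) := by
      exact_mod_cast Finset.card_le_card (Finset.inter_subset_left)
    have h2 : ((S x ω).card : ℝ) ≤ ((S x ω).card : ℝ) ^ 2 := by
      exact_mod_cast Nat.le_self_pow two_ne_zero (S x ω).card
    linarith
  -- the countable partition of Ω according to the values of S x, S y
  set A : Finset Γ × Finset Γ → Set Ω := fun p => {ω | S x ω = p.1 ∧ S y ω = p.2} with hA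
  have hAm : ∀ p, MeasurableSet (A p) := fun p =>
    (hSmeas x (measurableSet_singleton p.1)).inter (hSmeas y (measurableSet_singleton p.2))
  have hAd : Pairwise (Function.onFun Disjoint A) := by
    intro p q hpq
    simp only [Function.onFun, Set.disjoint_left]
    rintro ω ⟨h1, h2⟩ ⟨h3, h4⟩
    exact hpq (Prod.ext (h1 ▸ h3 ▸ rfl) (h2 ▸ h4 ▸ rfl))
  have hAu : (⋃ p, A p) = Set.univ := by
    ext ω
    simp only [Set.mem_iUnion, Set.mem_univ, iff_true]
    exact ⟨(S x ω, S y ω), rfl, rfl⟩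
  -- the key per-cell computation
  have key : ∀ p : Finset Γ × Finset Γ,
      ∫ ω in A p, (∑ γ ∈ S x ω, s γ ω) * (∑ γ ∈ S y ω, s γ ω) ∂μ
        = ∫ ω in A p, ((S x ω ∩ S y ω).card : ℝ) ∂μ := by
    rintro ⟨F, G⟩
    -- the integral of a single sign product over the cell
    have hterm : ∀ γ δ : Γ, ∫ ω in A (F, G), s γ ω * s δ ω ∂μ
        = (μ (A (F, G))).toReal * (if γ = δ then 1 else 0) := by
      intro γ δ
      have hB : MeasurableSet ({c | c x = F ∧ c y = G} : Set (X → Finset Γ)) := by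
        have he : ({c | c x = F ∧ c y = G} : Set (X → Finset Γ))
            = (fun c : X → Finset Γ => c x) ⁻¹' {F} ∩ (fun c : X → Finset Γ => c y) ⁻¹' {G} := rfl
        rw [he]
        exact ((measurable_pi_apply x) (measurableSet_singleton F)).inter
          ((measurable_pi_apply y) (measurableSet_singleton G))
      have hf : Measurable fun c : X → Finset Γ =>
          Set.indicator ({c | c x = F ∧ c y = G} : Set (X → Finset Γ)) (fun _ => (1 : ℝ)) c :=
        measurable_const.indicator hB
      have hg : Measurable fun u : Γ → ℝ => u γ * u δ :=
        (measurable_pi_apply γ).mul (measurable_pi_apply δ)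
      have hindep2 : IndepFun ((A (F, G)).indicator (fun _ => (1 : ℝ)))
          (fun ω => s γ ω * s δ ω) μ := by
        have h := hSsindep.comp hf hg
        convert h using 2 <;> rfl
      rw [← integral_indicator (hAm (F, G))]
      have hrw : (A (F, G)).indicator (fun ω => s γ ω * s δ ω)
          = fun ω => ((A (F, G)).indicator (fun _ => (1 : ℝ)) ω) * (s γ ω * s δ ω) := by
        funext ω
        by_cases h : ω ∈ A (F, G) <;> simp [Set.indicator_apply, h]
      rw [hrw]
      have h0 : integral μ ((A (F, G)).indicator (fun _ => (1 : ℝ)) * fun ω => s γ ω * s δ ω)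
          = (μ (A (F, G))).toReal * (if γ = δ then 1 else 0) := by
        have hone : ∫ ω, (A (F, G)).indicator (fun _ => (1 : ℝ)) ω ∂μ
            = (μ (A (F, G))).toReal := integral_indicator_one (hAm (F, G))
        rw [hindep2.integral_mul_eq_mul_integral
          ((integrable_const (1 : ℝ)).indicator (hAm (F, G))).aestronglyMeasurable (hmulint γ δ).aestronglyMeasurable,
          hone, hmul γ δ]
      exact h0
    -- left-hand side over the cell
    have hL : ∫ ω in A (F, G), (∑ γ ∈ S x ω, s γ ω) * (∑ γ ∈ S y ω, s γ ω) ∂μ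
        = ∑ γ ∈ F, ∑ δ ∈ G, ∫ ω in A (F, G), s γ ω * s δ ω ∂μ := by
      rw [setIntegral_congr_fun (hAm (F, G))
        (g := fun ω => ∑ γ ∈ F, ∑ δ ∈ G, s γ ω * s δ ω) ?_]
      · rw [integral_finset_sum _ fun γ _ =>
          (integrable_finset_sum _ fun δ _ => (hmulint γ δ)).integrableOn]
        exact Finset.sum_congr rfl fun γ _ =>
          integral_finset_sum _ fun δ _ => (hmulint γ δ).integrableOn
      · rintro ω ⟨h1, h2⟩
        simp only
        rw [h1, h2, Finset.sum_mul_sum]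
    have hsum : ∑ γ ∈ F, ∑ δ ∈ G, (if γ = δ then (1 : ℝ) else 0) = ((F ∩ G).card : ℝ) := by
      have h1 : ∀ γ : Γ, ∑ δ ∈ G, (if γ = δ then (1 : ℝ) else 0)
          = if γ ∈ G then (1 : ℝ) else 0 := fun γ => by
        simp [Finset.sum_ite_eq]
      calc ∑ γ ∈ F, ∑ δ ∈ G, (if γ = δ then (1 : ℝ) else 0)
          = ∑ γ ∈ F, (if γ ∈ G then (1 : ℝ) else 0) := Finset.sum_congr rfl fun γ _ => h1 γ
        _ = ((F ∩ G).card : ℝ) := by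
            rw [Finset.sum_ite_mem]
            simp
    have hR : ∫ ω in A (F, G), ((S x ω ∩ S y ω).card : ℝ) ∂μ
        = (μ (A (F, G))).toReal * ((F ∩ G).card : ℝ) := by
      rw [setIntegral_congr_fun (hAm (F, G)) (g := fun _ => ((F ∩ G).card : ℝ)) ?_,
        setIntegral_const, smul_eq_mul, measureReal_def]
      rintro ω ⟨h1, h2⟩
      simp only
      rw [h1, h2]
    rw [hL, hR]
    simp only [hterm]
    rw [← hsum, Finset.mul_sum]
    exact Finset.sum_congr rfl fun γ _ => by rw [Finset.mul_sum]
  -- assemble via the countable partition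
  refine ⟨hint, ?_⟩
  have eq1 : ∫ ω, (∑ γ ∈ S x ω, s γ ω) * (∑ γ ∈ S y ω, s γ ω) ∂μ
      = ∑' p, ∫ ω in A p, (∑ γ ∈ S x ω, s γ ω) * (∑ γ ∈ S y ω, s γ ω) ∂μ := by
    rw [← setIntegral_univ, ← hAu, integral_iUnion hAm hAd (by rw [hAu]; exact hint.integrableOn)]
  have eq2 : ∫ ω, ((S x ω ∩ S y ω).card : ℝ) ∂μ
      = ∑' p, ∫ ω in A p, ((S x ω ∩ S y ω).card : ℝ) ∂μ := by
    rw [← setIntegral_univ, ← hAu, integral_iUnion hAm hAd (by rw [hAu]; exact hgint.integrableOn)]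
  rw [eq1, eq2]
  exact tsum_congr key
end

section
/- For every n ≥ 1, all points x_1,…,x_n and all real numbers t_1,…,t_n, one has E[exp(i Σ_{i=1}^n t_i h(x_i))] = E[ Π_{∅ ≠ I ⊆ {1,…,n}} (cos(Σ_{i∈I} t_i))^{A_I} ], where for each nonempty I ⊆ {1,…,n} the random variable A_I(ω) is the number of γ ∈ S_{x_1}(ω) ∪ ⋯ ∪ S_{x_n}(ω) such that {i : γ ∈ S_{x_i}(ω)} = I (the number of loops encircling exactly the points x_i with i ∈ I among x_1,…,x_n). -/
open MeasureTheory ProbabilityTheory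

section LoopAux

variable {Ω : Type*} [MeasurableSpace Ω] {μ : Measure Ω} [IsProbabilityMeasure μ]

set_option linter.unusedSectionVars false

/-- Expectation of the product of two independent integrable complex random variables. -/
lemma loopAux_integral_mul_complex {A B : Ω → ℂ} (h : IndepFun A B μ)
    (hA : Integrable A μ) (hB : Integrable B μ) (hAB : Integrable (fun ω => A ω * B ω) μ) :
    ∫ ω, A ω * B ω ∂μ = (∫ ω, A ω ∂μ) * ∫ ω, B ω ∂μ := by
  have mre : Measurable fun z : ℂ => z.re := Complex.measurable_re
  have mim : Measurable fun z : ℂ => z.im := Complex.measurable_im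
  have hiar : Integrable (fun ω => (A ω).re) μ := hA.re
  have hiai : Integrable (fun ω => (A ω).im) μ := hA.im
  have hibr : Integrable (fun ω => (B ω).re) μ := hB.re
  have hibi : Integrable (fun ω => (B ω).im) μ := hB.im
  have hrr : IndepFun (fun ω => (A ω).re) (fun ω => (B ω).re) μ := h.comp mre mre
  have hri : IndepFun (fun ω => (A ω).re) (fun ω => (B ω).im) μ := h.comp mre mim
  have hir : IndepFun (fun ω => (A ω).im) (fun ω => (B ω).re) μ := h.comp mim mre
  have hii : IndepFun (fun ω => (A ω).im) (fun ω => (B ω).im) μ := h.comp mim mim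
  have irr : Integrable (fun ω => (A ω).re * (B ω).re) μ := hrr.integrable_mul hiar hibr
  have iri : Integrable (fun ω => (A ω).re * (B ω).im) μ := hri.integrable_mul hiar hibi
  have iir : Integrable (fun ω => (A ω).im * (B ω).re) μ := hir.integrable_mul hiai hibr
  have iii : Integrable (fun ω => (A ω).im * (B ω).im) μ := hii.integrable_mul hiai hibi
  have err : ∫ ω, (A ω).re * (B ω).re ∂μ = (∫ ω, (A ω).re ∂μ) * ∫ ω, (B ω).re ∂μ :=
    hrr.integral_fun_mul_eq_mul_integral hiar.1 hibr.1
  have eri : ∫ ω, (A ω).re * (B ω).im ∂μ = (∫ ω, (A ω).re ∂μ) * ∫ ω, (B ω).im ∂μ :=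
    hri.integral_fun_mul_eq_mul_integral hiar.1 hibi.1
  have eir : ∫ ω, (A ω).im * (B ω).re ∂μ = (∫ ω, (A ω).im ∂μ) * ∫ ω, (B ω).re ∂μ :=
    hir.integral_fun_mul_eq_mul_integral hiai.1 hibr.1
  have eii : ∫ ω, (A ω).im * (B ω).im ∂μ = (∫ ω, (A ω).im ∂μ) * ∫ ω, (B ω).im ∂μ :=
    hii.integral_fun_mul_eq_mul_integral hiai.1 hibi.1
  have EA := integral_re_add_im (𝕜 := ℂ) hA
  have EB := integral_re_add_im (𝕜 := ℂ) hB
  have EAB := integral_re_add_im (𝕜 := ℂ) hAB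
  simp only [RCLike.re_to_complex, RCLike.im_to_complex, RCLike.I_to_complex] at EA EB EAB
  rw [← EA, ← EB, ← EAB]
  have h1 : ∫ ω, (A ω * B ω).re ∂μ
      = (∫ ω, (A ω).re ∂μ) * (∫ ω, (B ω).re ∂μ) - (∫ ω, (A ω).im ∂μ) * ∫ ω, (B ω).im ∂μ := by
    rw [← err, ← eii, ← integral_sub irr iii]
    exact integral_congr_ae (Filter.Eventually.of_forall fun ω => by simp [Complex.mul_re])
  have h2 : ∫ ω, (A ω * B ω).im ∂μ
      = (∫ ω, (A ω).re ∂μ) * (∫ ω, (B ω).im ∂μ) + (∫ ω, (A ω).im ∂μ) * ∫ ω, (B ω).re ∂μ := by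
    rw [← eri, ← eir, ← integral_add iri iir]
    exact integral_congr_ae (Filter.Eventually.of_forall fun ω => by simp [Complex.mul_im])
  rw [h1, h2]
  push_cast
  ring_nf
  simp [Complex.I_sq]
  ring

lemma loopAux_integrable_exp {Y : Ω → ℝ} (hY : Measurable Y) :
    Integrable (fun ω => Complex.exp (Complex.I * (Y ω : ℂ))) μ := by
  refine ⟨(Complex.measurable_exp.comp ((Complex.measurable_ofReal.comp hY).const_mul
    Complex.I)).aestronglyMeasurable, ?_⟩
  refine HasFiniteIntegral.of_bounded (C := 1) (Filter.Eventually.of_forall fun ω => ?_)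
  rw [mul_comm]
  simp [Complex.norm_exp]

lemma loopAux_exp_sign (c : ℝ) {Y : Ω → ℝ} (hY : Measurable Y)
    (h1 : μ {ω | Y ω = 1} = 1/2) (h2 : μ {ω | Y ω = -1} = 1/2) :
    ∫ ω, Complex.exp (Complex.I * ((c * Y ω : ℝ) : ℂ)) ∂μ = (Real.cos c : ℂ) := by
  set f : Ω → ℂ := fun ω => Complex.exp (Complex.I * ((c * Y ω : ℝ) : ℂ)) with hf
  have hfi : Integrable f μ := loopAux_integrable_exp (hY.const_mul c)
  have hA : MeasurableSet {ω | Y ω = 1} := hY (measurableSet_singleton 1)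
  have hB : MeasurableSet {ω | Y ω = -1} := hY (measurableSet_singleton (-1))
  have hdisj : Disjoint {ω | Y ω = 1} {ω | Y ω = -1} := by
    rw [Set.disjoint_left]
    intro ω hω hω'
    simp only [Set.mem_setOf_eq] at hω hω'
    rw [hω] at hω'; norm_num at hω'
  have hcompl : μ ({ω | Y ω = 1} ∪ {ω | Y ω = -1})ᶜ = 0 := by
    have hu : μ ({ω | Y ω = 1} ∪ {ω | Y ω = -1}) = 1 := by
      rw [measure_union hdisj hB, h1, h2]
      simp [one_div, ENNReal.inv_two_add_inv_two]
    have h := measure_compl (hA.union hB) (measure_ne_top μ _)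
    rw [hu] at h
    simpa [measure_univ] using h
  have hres : μ.restrict ({ω | Y ω = 1} ∪ {ω | Y ω = -1}) = μ :=
    Measure.restrict_eq_self_of_ae_mem (by
      rw [Filter.Eventually]
      have : {ω | ω ∈ {ω | Y ω = 1} ∪ {ω | Y ω = -1}} = ({ω | Y ω = 1} ∪ {ω | Y ω = -1}) := rfl
      rw [this, mem_ae_iff]
      exact hcompl)
  have hsplit : ∫ ω, f ω ∂μ
      = (∫ ω in {ω | Y ω = 1}, f ω ∂μ) + ∫ ω in {ω | Y ω = -1}, f ω ∂μ := by
    rw [← setIntegral_union hdisj hB hfi.integrableOn hfi.integrableOn]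
    conv_lhs => rw [← hres]
  have e1 : ∫ ω in {ω | Y ω = 1}, f ω ∂μ
      = ((1:ℝ)/2) • Complex.exp (Complex.I * (c : ℂ)) := by
    rw [setIntegral_congr_fun hA (g := fun _ => Complex.exp (Complex.I * (c : ℂ)))
      (fun ω hω => by simp only [Set.mem_setOf_eq] at hω; simp [hf, hω])]
    rw [setIntegral_const, measureReal_def, h1]
    norm_num
  have e2 : ∫ ω in {ω | Y ω = -1}, f ω ∂μ
      = ((1:ℝ)/2) • Complex.exp (Complex.I * ((-c : ℝ) : ℂ)) := by
    rw [setIntegral_congr_fun hB (g := fun _ => Complex.exp (Complex.I * ((-c : ℝ) : ℂ)))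
      (fun ω hω => by simp only [Set.mem_setOf_eq] at hω; simp [hf, hω])]
    rw [setIntegral_const, measureReal_def, h2]
    norm_num
  rw [hf] at hsplit ⊢
  rw [hsplit, e1, e2]
  have hexp : ∀ r : ℝ, Complex.exp (Complex.I * (r : ℂ))
      = Complex.cos r + Complex.sin r * Complex.I := fun r => by
    rw [mul_comm]; exact Complex.exp_mul_I _
  rw [hexp c, hexp (-c)]
  push_cast
  simp only [Complex.real_smul, Complex.cos_neg, Complex.sin_neg]
  push_cast
  ring

lemma loopAux_exp_sum {Γ : Type*} [DecidableEq Γ] {s : Γ → Ω → ℝ}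
    (hsmeas : ∀ γ, Measurable (s γ))
    (hsign : ∀ γ, μ {ω | s γ ω = 1} = 1/2 ∧ μ {ω | s γ ω = -1} = 1/2)
    (hsindep : iIndepFun (m := fun _ : Γ => (inferInstance : MeasurableSpace ℝ)) s μ)
    (c : Γ → ℝ) (T : Finset Γ) :
    ∫ ω, Complex.exp (Complex.I * ((∑ γ ∈ T, c γ * s γ ω : ℝ) : ℂ)) ∂μ
      = ((∏ γ ∈ T, Real.cos (c γ) : ℝ) : ℂ) := by
  classical
  induction T using Finset.induction_on with
  | empty => simp
  | @insert a T ha ih =>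
    set f : Γ → Ω → ℝ := fun γ ω => c γ * s γ ω with hfdef
    have hfm : ∀ γ, Measurable (f γ) := fun γ => (hsmeas γ).const_mul (c γ)
    have hfind : iIndepFun (m := fun _ : Γ => (inferInstance : MeasurableSpace ℝ)) f μ :=
      hsindep.comp (fun γ r => c γ * r) (fun γ => measurable_const_mul _)
    have hXm : Measurable (fun ω => ∑ γ ∈ T, f γ ω) :=
      Finset.measurable_sum T fun γ _ => hfm γ
    have hsum_ind : IndepFun (fun ω => ∑ γ ∈ T, f γ ω) (f a) μ := by
      have h0 := iIndepFun.indepFun_finsetSum_of_notMem hfind hfm ha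
      have h2 : (∑ j ∈ T, f j) = fun ω => ∑ γ ∈ T, f γ ω := by
        ext ω; simp [Finset.sum_apply]
      rwa [h2] at h0
    set e : ℝ → ℂ := fun r => Complex.exp (Complex.I * r) with hedef
    have hem : Measurable e :=
      Complex.measurable_exp.comp (Complex.measurable_ofReal.const_mul _)
    have hind2 : IndepFun (fun ω => e (∑ γ ∈ T, f γ ω)) (fun ω => e (f a ω)) μ :=
      hsum_ind.comp hem hem
    have iA : Integrable (fun ω => e (∑ γ ∈ T, f γ ω)) μ := loopAux_integrable_exp hXm
    have iB : Integrable (fun ω => e (f a ω)) μ := loopAux_integrable_exp (hfm a)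
    have iAB : Integrable (fun ω => e (∑ γ ∈ T, f γ ω) * e (f a ω)) μ := by
      refine (loopAux_integrable_exp (hXm.add (hfm a))).congr
        (Filter.Eventually.of_forall fun ω => ?_)
      simp only [hedef]
      push_cast [Pi.add_apply]
      rw [mul_add, Complex.exp_add]
    have hstep : ∫ ω, Complex.exp (Complex.I * ((∑ γ ∈ insert a T, c γ * s γ ω : ℝ) : ℂ)) ∂μ
        = ∫ ω, e (∑ γ ∈ T, f γ ω) * e (f a ω) ∂μ := by
      refine integral_congr_ae (Filter.Eventually.of_forall fun ω => ?_)
      simp only [hedef, hfdef]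
      push_cast [Finset.sum_insert ha]
      rw [mul_add, Complex.exp_add]
      ring
    rw [hstep, loopAux_integral_mul_complex hind2 iA iB iAB]
    have hB : ∫ ω, e (f a ω) ∂μ = (Real.cos (c a) : ℂ) :=
      loopAux_exp_sign (c a) (hsmeas a) (hsign a).1 (hsign a).2
    rw [ih, hB, Finset.prod_insert ha]
    push_cast
    ring

end LoopAux

/-- In the loop-sign model, for points `x 1, …, x n` and reals `t 1, …, t n`,
`E[exp(i ∑ t_i h(x_i))] = E[∏_{∅ ≠ I ⊆ {1,…,n}} cos(∑_{i ∈ I} t_i) ^ (A_I)]`, where `A_I ω` is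
the number of loops `γ ∈ S x₁ ω ∪ ⋯ ∪ S xₙ ω` with `{i : γ ∈ S (x i) ω} = I`, i.e. the number
of loops encircling exactly the points `x i` with `i ∈ I`. -/
theorem loopSign_charFun_multipoint
    {Ω : Type*} [MeasurableSpace Ω] (μ : Measure Ω) [IsProbabilityMeasure μ]
    {Γ : Type*} [Countable Γ] [DecidableEq Γ] {X : Type*}
    (S : X → Ω → Finset Γ) (s : Γ → Ω → ℝ)
    (hSmeas : ∀ x : X, Measurable (S x))
    (hsmeas : ∀ γ : Γ, Measurable (s γ))
    (hsign : ∀ γ : Γ, μ {ω | s γ ω = 1} = 1/2 ∧ μ {ω | s γ ω = -1} = 1/2)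
    (hsindep : iIndepFun (m := fun _ : Γ => (inferInstance : MeasurableSpace ℝ)) s μ)
    (hSsindep : IndepFun (fun ω (x : X) => S x ω) (fun ω (γ : Γ) => s γ ω) μ)
    (n : ℕ) (hn : 1 ≤ n) (x : Fin n → X) (t : Fin n → ℝ) :
    ∫ ω, Complex.exp (Complex.I * (∑ i, t i * (∑ γ ∈ S (x i) ω, s γ ω) : ℝ)) ∂μ
      = ((∫ ω, ∏ I ∈ (Finset.univ : Finset (Fin n)).powerset.erase ∅,
            (Real.cos (∑ i ∈ I, t i)) ^
              (((Finset.univ.biUnion fun i => S (x i) ω).filter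
                  fun γ => (Finset.univ.filter fun i => γ ∈ S (x i) ω) = I).card) ∂μ : ℝ) : ℂ) := by
  classical
  haveI hdisc : DiscreteMeasurableSpace (Finset Γ) :=
    inferInstance
  -- The vector of loop sets around the points x i
  set V : Ω → (Fin n → Finset Γ) := fun ω i => S (x i) ω with hVdef
  have hVmeas : Measurable V := measurable_pi_lambda _ fun i => hSmeas (x i)
  have hAmeas : ∀ v : Fin n → Finset Γ, MeasurableSet (V ⁻¹' {v}) :=
    fun v => hVmeas (MeasurableSet.of_discrete)
  -- the two integrands
  set F1 : Ω → ℂ := fun ω =>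
    Complex.exp (Complex.I * (∑ i, t i * (∑ γ ∈ S (x i) ω, s γ ω) : ℝ)) with hF1def
  set g : (Fin n → Finset Γ) → ℝ := fun v =>
    ∏ I ∈ (Finset.univ : Finset (Fin n)).powerset.erase ∅,
      (Real.cos (∑ i ∈ I, t i)) ^
        (((Finset.univ.biUnion fun i => v i).filter
            fun γ => (Finset.univ.filter fun i => γ ∈ v i) = I).card) with hgdef
  -- measurability and integrability of the integrands
  have hsummeas : ∀ i : Fin n, Measurable (fun ω => ∑ γ ∈ S (x i) ω, s γ ω) := by
    intro i
    have hFm : Measurable (fun p : (Γ → ℝ) × Finset Γ => ∑ γ ∈ p.2, p.1 γ) :=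
      measurable_from_prod_countable_left fun T =>
        Finset.measurable_sum T fun γ _ => measurable_pi_apply γ
    exact hFm.comp ((measurable_pi_lambda _ hsmeas).prodMk (hSmeas (x i)))
  have hYm : Measurable (fun ω => ∑ i, t i * (∑ γ ∈ S (x i) ω, s γ ω)) :=
    Finset.measurable_sum Finset.univ fun i _ => (hsummeas i).const_mul (t i)
  have hF1i : Integrable F1 μ := loopAux_integrable_exp hYm
  have hgabs : ∀ v, |g v| ≤ 1 := by
    intro v
    rw [hgdef]
    simp only
    rw [Finset.abs_prod]
    refine Finset.prod_le_one (fun _ _ => abs_nonneg _) (fun I _ => ?_)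
    rw [abs_pow]
    exact pow_le_one₀ (abs_nonneg _) (Real.abs_cos_le_one _)
  have hF2i : Integrable (fun ω => g (V ω)) μ := by
    refine ⟨((Measurable.of_discrete (f := g)).comp hVmeas).aestronglyMeasurable, ?_⟩
    refine HasFiniteIntegral.of_bounded (C := 1) (Filter.Eventually.of_forall fun ω => ?_)
    simpa [Real.norm_eq_abs] using hgabs (V ω)
  -- the partition according to the value of V
  have hdisj : Pairwise (Function.onFun Disjoint fun v : Fin n → Finset Γ => V ⁻¹' {v}) := by
    intro v w hvw
    rw [Function.onFun, Set.disjoint_left]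
    intro ω h1 h2
    exact hvw (by rw [← Set.mem_singleton_iff.1 h1, ← Set.mem_singleton_iff.1 h2])
  have hcover : (⋃ v : Fin n → Finset Γ, V ⁻¹' {v}) = Set.univ := by
    ext ω
    simp only [Set.mem_iUnion, Set.mem_preimage, Set.mem_singleton_iff, Set.mem_univ, iff_true]
    exact ⟨V ω, rfl⟩
  have hs1 : HasSum (fun v : Fin n → Finset Γ => ∫ ω in V ⁻¹' {v}, F1 ω ∂μ) (∫ ω, F1 ω ∂μ) := by
    have h := hasSum_integral_iUnion hAmeas hdisj
      (by rw [hcover]; exact hF1i.integrableOn)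
    rwa [hcover, setIntegral_univ] at h
  have hs2 : HasSum (fun v : Fin n → Finset Γ => ∫ ω in V ⁻¹' {v}, g (V ω) ∂μ)
      (∫ ω, g (V ω) ∂μ) := by
    have h := hasSum_integral_iUnion hAmeas hdisj
      (by rw [hcover]; exact hF2i.integrableOn)
    rwa [hcover, setIntegral_univ] at h
  -- termwise identity
  have key : ∀ v : Fin n → Finset Γ,
      ∫ ω in V ⁻¹' {v}, F1 ω ∂μ = ((∫ ω in V ⁻¹' {v}, g (V ω) ∂μ : ℝ) : ℂ) := by
    intro v
    set T : Finset Γ := Finset.univ.biUnion v with hTdef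
    set cf : Γ → ℝ := fun γ => ∑ i ∈ Finset.univ.filter (fun i => γ ∈ v i), t i with hcfdef
    -- the right-hand side on the slice
    have hRv : ∫ ω in V ⁻¹' {v}, g (V ω) ∂μ = (μ (V ⁻¹' {v})).toReal * g v := by
      rw [setIntegral_congr_fun (hAmeas v) (g := fun _ => g v)
        (fun ω hω => by rw [Set.mem_preimage, Set.mem_singleton_iff] at hω; rw [hω])]
      rw [setIntegral_const, smul_eq_mul, measureReal_def]
    -- the left-hand integrand on the slice
    have hcongr : ∀ ω ∈ V ⁻¹' {v},
        F1 ω = Complex.exp (Complex.I * ((∑ γ ∈ T, cf γ * s γ ω : ℝ) : ℂ)) := by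
      intro ω hω
      rw [Set.mem_preimage, Set.mem_singleton_iff] at hω
      have hωv : ∀ i, S (x i) ω = v i := fun i => congrFun hω i
      have hsub : ∀ i, v i ⊆ T := fun i => Finset.subset_biUnion_of_mem v (Finset.mem_univ i)
      have hsum : (∑ i, t i * (∑ γ ∈ S (x i) ω, s γ ω)) = ∑ γ ∈ T, cf γ * s γ ω := by
        calc ∑ i, t i * (∑ γ ∈ S (x i) ω, s γ ω)
            = ∑ i, ∑ γ ∈ v i, t i * s γ ω := by
              refine Finset.sum_congr rfl fun i _ => ?_
              rw [hωv i, Finset.mul_sum]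
          _ = ∑ i, ∑ γ ∈ T.filter (fun γ => γ ∈ v i), t i * s γ ω := by
              refine Finset.sum_congr rfl fun i _ => ?_
              congr 1
              rw [Finset.filter_mem_eq_inter, Finset.inter_eq_right.2 (hsub i)]
          _ = ∑ i, ∑ γ ∈ T, if γ ∈ v i then t i * s γ ω else 0 := by
              refine Finset.sum_congr rfl fun i _ => Finset.sum_filter _ _
          _ = ∑ γ ∈ T, ∑ i, if γ ∈ v i then t i * s γ ω else 0 := Finset.sum_comm
          _ = ∑ γ ∈ T, cf γ * s γ ω := by
              refine Finset.sum_congr rfl fun γ _ => ?_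
              rw [hcfdef]
              simp only
              rw [Finset.sum_filter, Finset.sum_mul]
              refine Finset.sum_congr rfl fun i _ => ?_
              split <;> simp
      rw [hF1def]
      simp only
      rw [hsum]
    -- fiberwise regrouping of the cosine product
    have hprod : ∏ γ ∈ T, Real.cos (cf γ) = g v := by
      have hmaps : ∀ γ ∈ T, (Finset.univ.filter fun i => γ ∈ v i)
          ∈ (Finset.univ : Finset (Fin n)).powerset.erase ∅ := by
        intro γ hγ
        rcases Finset.mem_biUnion.1 hγ with ⟨i, _, hi⟩
        refine Finset.mem_erase.2 ⟨?_, Finset.mem_powerset.2 (Finset.subset_univ _)⟩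
        exact Finset.ne_empty_of_mem (Finset.mem_filter.2 ⟨Finset.mem_univ i, hi⟩)
      rw [← Finset.prod_fiberwise_of_maps_to hmaps (fun γ => Real.cos (cf γ))]
      rw [hgdef]
      simp only
      refine Finset.prod_congr rfl fun I hI => ?_
      rw [show ((Finset.univ.biUnion fun i => v i).filter
          fun γ => (Finset.univ.filter fun i => γ ∈ v i) = I) =
          T.filter (fun γ => (Finset.univ.filter fun i => γ ∈ v i) = I) from rfl]
      rw [← Finset.prod_const]
      refine Finset.prod_congr rfl fun γ hγ => ?_
      have hfib := (Finset.mem_filter.1 hγ).2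
      rw [hcfdef]
      simp only
      rw [hfib]
    -- independence of the slice indicator and the sign part
    set Fs : Ω → ℂ := fun ω => Complex.exp (Complex.I * ((∑ γ ∈ T, cf γ * s γ ω : ℝ) : ℂ))
      with hFsdef
    set ind : Ω → ℂ := (V ⁻¹' {v}).indicator (fun _ => (1 : ℂ)) with hinddef
    have hFsm : Measurable Fs :=
      Complex.measurable_exp.comp ((Complex.measurable_ofReal.comp
        (Finset.measurable_sum T fun γ _ => (hsmeas γ).const_mul (cf γ))).const_mul Complex.I)
    have hFsi : Integrable Fs μ :=
      loopAux_integrable_exp (Finset.measurable_sum T fun γ _ => (hsmeas γ).const_mul (cf γ))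
    have hindi : Integrable ind μ := (integrable_const (1 : ℂ)).indicator (hAmeas v)
    have hindep : IndepFun ind Fs μ := by
      set φ : (X → Finset Γ) → ℂ :=
        ({gS : X → Finset Γ | (fun i => gS (x i)) = v}).indicator (fun _ => (1 : ℂ)) with hφdef
      set ψ : (Γ → ℝ) → ℂ :=
        fun f => Complex.exp (Complex.I * ((∑ γ ∈ T, cf γ * f γ : ℝ) : ℂ)) with hψdef
      have hM : MeasurableSet {gS : X → Finset Γ | (fun i => gS (x i)) = v} := by
        have : {gS : X → Finset Γ | (fun i => gS (x i)) = v}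
            = ⋂ i, (fun gS : X → Finset Γ => gS (x i)) ⁻¹' {v i} := by
          ext gS
          simp [funext_iff]
        rw [this]
        exact MeasurableSet.iInter fun i =>
          measurable_pi_apply (x i) (MeasurableSet.of_discrete)
      have hφm : Measurable φ := measurable_const.indicator hM
      have hψm : Measurable ψ :=
        Complex.measurable_exp.comp ((Complex.measurable_ofReal.comp
          (Finset.measurable_sum T fun γ _ =>
            (measurable_pi_apply (X := fun _ : Γ => ℝ) γ).const_mul (cf γ))).const_mul Complex.I)
      have h := hSsindep.comp hφm hψm
      have h1 : (φ ∘ fun ω (x : X) => S x ω) = ind := by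
        funext ω
        rw [hinddef, hφdef]
        simp only [Function.comp_apply]
        by_cases hω : ω ∈ V ⁻¹' {v}
        · rw [Set.indicator_of_mem hω]
          rw [Set.indicator_of_mem]
          exact Set.mem_preimage.1 hω
        · rw [Set.indicator_of_notMem hω]
          rw [Set.indicator_of_notMem]
          exact fun hc => hω (Set.mem_preimage.2 hc)
      have h2 : (ψ ∘ fun ω (γ : Γ) => s γ ω) = Fs := rfl
      rwa [h1, h2] at h
    have hiAB : Integrable (fun ω => ind ω * Fs ω) μ := by
      refine ⟨(hindi.1.mul hFsi.1), ?_⟩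
      refine HasFiniteIntegral.of_bounded (C := 1) (Filter.Eventually.of_forall fun ω => ?_)
      rw [norm_mul]
      by_cases hω : ω ∈ V ⁻¹' {v}
      · rw [hinddef]
        simp only [Set.indicator_of_mem hω]
        rw [hFsdef]
        simp only
        rw [mul_comm Complex.I]
        simp [Complex.norm_exp]
      · rw [hinddef]
        simp [Set.indicator_of_notMem hω]
    have hswap : ∫ ω in V ⁻¹' {v}, F1 ω ∂μ = ∫ ω, ind ω * Fs ω ∂μ := by
      rw [← integral_indicator (hAmeas v)]
      refine integral_congr_ae (Filter.Eventually.of_forall fun ω => ?_)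
      by_cases hω : ω ∈ V ⁻¹' {v}
      · simp only [hinddef, Set.indicator_of_mem hω, one_mul]
        exact hcongr ω hω
      · simp only [hinddef, Set.indicator_of_notMem hω, zero_mul]
    have hindint : ∫ ω, ind ω ∂μ = ((μ (V ⁻¹' {v})).toReal : ℂ) := by
      rw [hinddef, integral_indicator_const (1 : ℂ) (hAmeas v)]
      simp [Complex.real_smul, measureReal_def]
    have hFsint : ∫ ω, Fs ω ∂μ = ((∏ γ ∈ T, Real.cos (cf γ) : ℝ) : ℂ) :=
      loopAux_exp_sum hsmeas hsign hsindep cf T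
    rw [hswap, loopAux_integral_mul_complex hindep hindi hFsi hiAB, hindint, hFsint, hprod,
      hRv]
    push_cast
    ring
  -- combine
  have hs1' : HasSum (fun v : Fin n → Finset Γ => ((∫ ω in V ⁻¹' {v}, g (V ω) ∂μ : ℝ) : ℂ))
      (∫ ω, F1 ω ∂μ) := by
    rw [show (fun v : Fin n → Finset Γ => ((∫ ω in V ⁻¹' {v}, g (V ω) ∂μ : ℝ) : ℂ))
      = fun v => ∫ ω in V ⁻¹' {v}, F1 ω ∂μ from funext fun v => (key v).symm]
    exact hs1
  have hs2' : HasSum (fun v : Fin n → Finset Γ => ((∫ ω in V ⁻¹' {v}, g (V ω) ∂μ : ℝ) : ℂ))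
      (((∫ ω, g (V ω) ∂μ : ℝ)) : ℂ) := Complex.ofRealCLM.hasSum hs2
  exact hs1'.unique hs2'
end

section
/- Let x_1, x_2, x_3, x_4 be points (not necessarily distinct) such that E[N(x_i)²] < ∞ for i = 1,…,4. Then the product h(x_1)h(x_2)h(x_3)h(x_4) is integrable and E[h(x_1)h(x_2)h(x_3)h(x_4)] = E[ N(x_1,x_2)N(x_3,x_4) + N(x_1,x_3)N(x_2,x_4) + N(x_1,x_4)N(x_2,x_3) − 2·N(x_1,x_2,x_3,x_4) ]. -/
open MeasureTheory ProbabilityTheory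

set_option linter.unusedSectionVars false
set_option maxHeartbeats 1000000

instance instMSCFinset (Γ : Type*) [Countable Γ] : MeasurableSingletonClass (Finset Γ) := inferInstance

section Count
variable {Γ : Type*} [DecidableEq Γ]

lemma indicator_pairing (a b c d : Γ) :
    (if (a = b ∧ c = d) ∨ (a = c ∧ b = d) ∨ (a = d ∧ b = c) then (1:ℝ) else 0)
      = (if a = b then (1:ℝ) else 0) * (if c = d then (1:ℝ) else 0)
        + (if a = c then (1:ℝ) else 0) * (if b = d then (1:ℝ) else 0)
        + (if a = d then (1:ℝ) else 0) * (if b = c then (1:ℝ) else 0)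
        - 2 * ((if a = b then (1:ℝ) else 0) * (if a = c then (1:ℝ) else 0)
            * (if a = d then (1:ℝ) else 0)) := by
  by_cases hab : a = b <;> by_cases hac : a = c <;> by_cases had : a = d <;>
    by_cases hbc : b = c <;> by_cases hbd : b = d <;> by_cases hcd : c = d <;>
    simp_all <;> norm_num <;> grind

lemma sum_eq_ind (a : Γ) (t : Finset Γ) :
    (∑ γ ∈ t, if a = γ then (1:ℝ) else 0) = if a ∈ t then 1 else 0 := by
  simpa using Finset.sum_ite_eq t a (fun _ => (1:ℝ))

lemma sum_ind_mem (t u : Finset Γ) :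
    (∑ γ ∈ t, if γ ∈ u then (1:ℝ) else 0) = ((t ∩ u).card : ℝ) := by
  rw [Finset.sum_ite_mem, Finset.sum_const, nsmul_eq_mul, mul_one]

example (t₃ t₄ : Finset Γ) (γ₁ γ₂ : Γ) :
    (∑ γ₃ ∈ t₃, ∑ γ₄ ∈ t₄,
       ((if γ₁ = γ₂ then (1:ℝ) else 0) * (if γ₃ = γ₄ then (1:ℝ) else 0)
        + (if γ₁ = γ₃ then (1:ℝ) else 0) * (if γ₂ = γ₄ then (1:ℝ) else 0)
        + (if γ₁ = γ₄ then (1:ℝ) else 0) * (if γ₂ = γ₃ then (1:ℝ) else 0)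
        - 2 * ((if γ₁ = γ₂ then (1:ℝ) else 0) * (if γ₁ = γ₃ then (1:ℝ) else 0)
            * (if γ₁ = γ₄ then (1:ℝ) else 0))))
      = (if γ₁ = γ₂ then (1:ℝ) else 0) * ((t₃ ∩ t₄).card : ℝ)
        + (if γ₁ ∈ t₃ then (1:ℝ) else 0) * (if γ₂ ∈ t₄ then (1:ℝ) else 0)
        + (if γ₁ ∈ t₄ then (1:ℝ) else 0) * (if γ₂ ∈ t₃ then (1:ℝ) else 0)
        - 2 * ((if γ₁ = γ₂ then (1:ℝ) else 0) * (if γ₁ ∈ t₃ then (1:ℝ) else 0)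
            * (if γ₁ ∈ t₄ then (1:ℝ) else 0)) := by
  simp only [Finset.sum_add_distrib, Finset.sum_sub_distrib, ← Finset.mul_sum,
    ← Finset.sum_mul, sum_eq_ind, Finset.mul_sum, Finset.sum_mul]
  simp only [← Finset.mul_sum, ← Finset.sum_mul, sum_eq_ind]
  rw [sum_ind_mem]


lemma ind_mul_ind (a : Γ) (t u : Finset Γ) :
    (if a ∈ t then (1:ℝ) else 0) * (if a ∈ u then (1:ℝ) else 0)
      = if a ∈ t ∩ u then (1:ℝ) else 0 := by
  by_cases h1 : a ∈ t <;> by_cases h2 : a ∈ u <;> simp [h1, h2]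

lemma counting (t₁ t₂ t₃ t₄ : Finset Γ) :
    (∑ γ₁ ∈ t₁, ∑ γ₂ ∈ t₂, ∑ γ₃ ∈ t₃, ∑ γ₄ ∈ t₄,
        if (γ₁ = γ₂ ∧ γ₃ = γ₄) ∨ (γ₁ = γ₃ ∧ γ₂ = γ₄) ∨ (γ₁ = γ₄ ∧ γ₂ = γ₃)
        then (1:ℝ) else 0)
      = ((t₁ ∩ t₂).card : ℝ) * ((t₃ ∩ t₄).card : ℝ)
        + ((t₁ ∩ t₃).card : ℝ) * ((t₂ ∩ t₄).card : ℝ)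
        + ((t₁ ∩ t₄).card : ℝ) * ((t₂ ∩ t₃).card : ℝ)
        - 2 * ((t₁ ∩ t₂ ∩ t₃ ∩ t₄).card : ℝ) := by
  have key : ∀ γ₁ γ₂ : Γ, (∑ γ₃ ∈ t₃, ∑ γ₄ ∈ t₄,
      if (γ₁ = γ₂ ∧ γ₃ = γ₄) ∨ (γ₁ = γ₃ ∧ γ₂ = γ₄) ∨ (γ₁ = γ₄ ∧ γ₂ = γ₃)
      then (1:ℝ) else 0)
      = (if γ₁ = γ₂ then (1:ℝ) else 0) * ((t₃ ∩ t₄).card : ℝ)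
        + (if γ₁ ∈ t₃ then (1:ℝ) else 0) * (if γ₂ ∈ t₄ then (1:ℝ) else 0)
        + (if γ₁ ∈ t₄ then (1:ℝ) else 0) * (if γ₂ ∈ t₃ then (1:ℝ) else 0)
        - 2 * ((if γ₁ = γ₂ then (1:ℝ) else 0) * (if γ₁ ∈ t₃ then (1:ℝ) else 0)
            * (if γ₁ ∈ t₄ then (1:ℝ) else 0)) := by
    intro γ₁ γ₂
    have step : ∀ γ₃ γ₄ : Γ,
        (if (γ₁ = γ₂ ∧ γ₃ = γ₄) ∨ (γ₁ = γ₃ ∧ γ₂ = γ₄) ∨ (γ₁ = γ₄ ∧ γ₂ = γ₃)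
          then (1:ℝ) else 0)
        = (if γ₁ = γ₂ then (1:ℝ) else 0) * (if γ₃ = γ₄ then (1:ℝ) else 0)
          + (if γ₁ = γ₃ then (1:ℝ) else 0) * (if γ₂ = γ₄ then (1:ℝ) else 0)
          + (if γ₁ = γ₄ then (1:ℝ) else 0) * (if γ₂ = γ₃ then (1:ℝ) else 0)
          - 2 * ((if γ₁ = γ₂ then (1:ℝ) else 0) * (if γ₁ = γ₃ then (1:ℝ) else 0)
              * (if γ₁ = γ₄ then (1:ℝ) else 0)) := fun γ₃ γ₄ => indicator_pairing γ₁ γ₂ γ₃ γ₄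
    rw [Finset.sum_congr rfl fun γ₃ _ => Finset.sum_congr rfl fun γ₄ _ => step γ₃ γ₄]
    simp only [Finset.sum_add_distrib, Finset.sum_sub_distrib, ← Finset.mul_sum,
      ← Finset.sum_mul, sum_eq_ind, Finset.mul_sum, Finset.sum_mul]
    simp only [← Finset.mul_sum, ← Finset.sum_mul, sum_eq_ind]
    rw [sum_ind_mem]
  rw [Finset.sum_congr rfl fun γ₁ _ => Finset.sum_congr rfl fun γ₂ _ => key γ₁ γ₂]
  simp only [Finset.sum_add_distrib, Finset.sum_sub_distrib, ← Finset.mul_sum,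
    ← Finset.sum_mul, sum_eq_ind, Finset.mul_sum, Finset.sum_mul]
  simp only [← Finset.mul_sum, ← Finset.sum_mul, sum_eq_ind, sum_ind_mem]
  simp only [ind_mul_ind, sum_ind_mem, Finset.inter_assoc]

end Count

section Signs
variable {Ω : Type*} [MeasurableSpace Ω] (μ : Measure Ω) [IsProbabilityMeasure μ]
  {Γ : Type*} [Countable Γ] [DecidableEq Γ] (s : Γ → Ω → ℝ)
  (hsmeas : ∀ γ : Γ, Measurable (s γ))
  (hsign : ∀ γ : Γ, μ {ω | s γ ω = 1} = 1/2 ∧ μ {ω | s γ ω = -1} = 1/2)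
  (hsindep : iIndepFun s μ)

include hsmeas hsign

lemma sign_pm (γ : Γ) : ∀ᵐ ω ∂μ, s γ ω = 1 ∨ s γ ω = -1 := by
  have hA : MeasurableSet {ω | s γ ω = 1} := (hsmeas γ) (measurableSet_singleton 1)
  have hB : MeasurableSet {ω | s γ ω = -1} := (hsmeas γ) (measurableSet_singleton (-1))
  have hU : μ ({ω | s γ ω = 1} ∪ {ω | s γ ω = -1}) = 1 := by
    rw [measure_union _ hB, (hsign γ).1, (hsign γ).2]
    · simp [one_div, ENNReal.inv_two_add_inv_two]
    · rw [Set.disjoint_left]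
      intro ω h1 h2
      simp only [Set.mem_setOf_eq] at h1 h2
      rw [h1] at h2; norm_num at h2
  have : μ ({ω | s γ ω = 1 ∨ s γ ω = -1}ᶜ) = 0 := by
    have h : {ω | s γ ω = 1 ∨ s γ ω = -1} = {ω | s γ ω = 1} ∪ {ω | s γ ω = -1} := rfl
    rw [h, measure_compl (hA.union hB) (measure_ne_top μ _), hU, measure_univ]
    simp
  exact this

lemma sign_abs (γ : Γ) : ∀ᵐ ω ∂μ, |s γ ω| ≤ 1 := by
  filter_upwards [sign_pm μ s hsmeas hsign γ] with ω h
  rcases h with h | h <;> rw [h] <;> norm_num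

lemma sign_sq (γ : Γ) : ∀ᵐ ω ∂μ, s γ ω * s γ ω = 1 := by
  filter_upwards [sign_pm μ s hsmeas hsign γ] with ω h
  rcases h with h | h <;> rw [h] <;> norm_num

lemma sign_int (γ : Γ) : Integrable (s γ) μ := by
  refine (integrable_const (1:ℝ)).mono' (hsmeas γ).aestronglyMeasurable ?_
  filter_upwards [sign_abs μ s hsmeas hsign γ] with ω h
  simpa using h

lemma sign_mean (γ : Γ) : ∫ ω, s γ ω ∂μ = 0 := by
  have hA : MeasurableSet {ω | s γ ω = 1} := (hsmeas γ) (measurableSet_singleton 1)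
  have hB : MeasurableSet {ω | s γ ω = -1} := (hsmeas γ) (measurableSet_singleton (-1))
  have hae : (fun ω => s γ ω) =ᵐ[μ] fun ω =>
      ({ω | s γ ω = 1} : Set Ω).indicator (fun _ => (1:ℝ)) ω
      - ({ω | s γ ω = -1} : Set Ω).indicator (fun _ => (1:ℝ)) ω := by
    filter_upwards [sign_pm μ s hsmeas hsign γ] with ω h
    rcases h with h | h <;>
      simp [Set.indicator_apply, Set.mem_setOf_eq, h] <;> norm_num
  rw [integral_congr_ae hae, integral_sub ((integrable_const (1:ℝ)).indicator hA)
    ((integrable_const (1:ℝ)).indicator hB), integral_indicator_const _ hA,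
    integral_indicator_const _ hB, measureReal_def, measureReal_def, (hsign γ).1, (hsign γ).2]
  simp

include hsindep in
lemma sign_mean2 {γ γ' : Γ} (h : γ ≠ γ') : ∫ ω, s γ ω * s γ' ω ∂μ = 0 := by
  have := (hsindep.indepFun h).integral_mul_eq_mul_integral (hsmeas γ).aestronglyMeasurable
    (hsmeas γ').aestronglyMeasurable
  calc ∫ ω, s γ ω * s γ' ω ∂μ = ∫ ω, (s γ * s γ') ω ∂μ := rfl
    _ = (∫ ω, s γ ω ∂μ) * ∫ ω, s γ' ω ∂μ := this
    _ = 0 := by rw [sign_mean μ s hsmeas hsign γ]; ring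

include hsindep in
lemma sign_mean4 {a b c d : Γ} (hab : a ≠ b) (hac : a ≠ c) (had : a ≠ d)
    (hbc : b ≠ c) (hbd : b ≠ d) (hcd : c ≠ d) :
    ∫ ω, s a ω * s b ω * s c ω * s d ω ∂μ = 0 := by
  have hprod : (∏ j ∈ ({a, b, c} : Finset Γ), s j) = fun ω => s a ω * s b ω * s c ω := by
    funext ω
    rw [Finset.prod_insert (by simp [hab, hac]), Finset.prod_insert (by simp [hbc]),
      Finset.prod_singleton]
    simp [mul_assoc]
  have hd : d ∉ ({a, b, c} : Finset Γ) := by simp [had.symm, hbd.symm, hcd.symm]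
  have hind := hsindep.indepFun_finsetProd_of_notMem hsmeas hd
  have := hind.integral_mul_eq_mul_integral
    (by rw [hprod]; exact (((hsmeas a).mul (hsmeas b)).mul (hsmeas c)).aestronglyMeasurable)
    (hsmeas d).aestronglyMeasurable
  calc ∫ ω, s a ω * s b ω * s c ω * s d ω ∂μ
      = ∫ ω, ((∏ j ∈ ({a, b, c} : Finset Γ), s j) * s d) ω ∂μ := by
        simp only [hprod, Pi.mul_apply]
    _ = (∫ ω, (∏ j ∈ ({a, b, c} : Finset Γ), s j) ω ∂μ) * ∫ ω, s d ω ∂μ := this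
    _ = 0 := by rw [sign_mean μ s hsmeas hsign d]; ring

end Signs

section M2
variable {Ω : Type*} [MeasurableSpace Ω] (μ : Measure Ω) [IsProbabilityMeasure μ]
  {Γ : Type*} [Countable Γ] [DecidableEq Γ] (s : Γ → Ω → ℝ)
variable (sign_sq' : ∀ γ : Γ, ∀ᵐ ω ∂μ, s γ ω * s γ ω = 1)
  (sign_mean2' : ∀ {γ γ' : Γ}, γ ≠ γ' → ∫ ω, s γ ω * s γ' ω ∂μ = 0)
  (sign_mean4' : ∀ {a b c d : Γ}, a ≠ b → a ≠ c → a ≠ d → b ≠ c → b ≠ d → c ≠ d →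
    ∫ ω, s a ω * s b ω * s c ω * s d ω ∂μ = 0)


include sign_sq' sign_mean2' sign_mean4' in
lemma fourMoment (γ₁ γ₂ γ₃ γ₄ : Γ) :
    ∫ ω, s γ₁ ω * s γ₂ ω * s γ₃ ω * s γ₄ ω ∂μ
      = if (γ₁ = γ₂ ∧ γ₃ = γ₄) ∨ (γ₁ = γ₃ ∧ γ₂ = γ₄) ∨ (γ₁ = γ₄ ∧ γ₂ = γ₃)
        then (1:ℝ) else 0 := by
  by_cases h12 : γ₁ = γ₂
  · subst h12
    by_cases h34 : γ₃ = γ₄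
    · subst h34
      rw [if_pos (Or.inl ⟨rfl, rfl⟩)]
      have hae : ∀ᵐ ω ∂μ, s γ₁ ω * s γ₁ ω * s γ₃ ω * s γ₃ ω = 1 := by
        filter_upwards [sign_sq' γ₁, sign_sq' γ₃] with ω h1 h3
        calc s γ₁ ω * s γ₁ ω * s γ₃ ω * s γ₃ ω
            = (s γ₁ ω * s γ₁ ω) * (s γ₃ ω * s γ₃ ω) := by ring
          _ = 1 := by rw [h1, h3, one_mul]
      rw [integral_congr_ae hae]; simp
    · rw [if_neg (by rintro (⟨h, h'⟩ | ⟨h, h'⟩ | ⟨h, h'⟩) <;> grind)]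
      have hae : ∀ᵐ ω ∂μ, s γ₁ ω * s γ₁ ω * s γ₃ ω * s γ₄ ω = s γ₃ ω * s γ₄ ω := by
        filter_upwards [sign_sq' γ₁] with ω h1
        calc s γ₁ ω * s γ₁ ω * s γ₃ ω * s γ₄ ω
            = (s γ₁ ω * s γ₁ ω) * (s γ₃ ω * s γ₄ ω) := by ring
          _ = _ := by rw [h1, one_mul]
      rw [integral_congr_ae hae]; exact sign_mean2' h34
  · by_cases h13 : γ₁ = γ₃
    · subst h13
      by_cases h24 : γ₂ = γ₄
      · subst h24
        rw [if_pos (Or.inr (Or.inl ⟨rfl, rfl⟩))]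
        have hae : ∀ᵐ ω ∂μ, s γ₁ ω * s γ₂ ω * s γ₁ ω * s γ₂ ω = 1 := by
          filter_upwards [sign_sq' γ₁, sign_sq' γ₂] with ω h1 h2
          calc s γ₁ ω * s γ₂ ω * s γ₁ ω * s γ₂ ω
              = (s γ₁ ω * s γ₁ ω) * (s γ₂ ω * s γ₂ ω) := by ring
            _ = 1 := by rw [h1, h2, one_mul]
        rw [integral_congr_ae hae]; simp
      · rw [if_neg (by rintro (⟨h, h'⟩ | ⟨h, h'⟩ | ⟨h, h'⟩) <;> grind)]
        have hae : ∀ᵐ ω ∂μ, s γ₁ ω * s γ₂ ω * s γ₁ ω * s γ₄ ω = s γ₂ ω * s γ₄ ω := by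
          filter_upwards [sign_sq' γ₁] with ω h1
          calc s γ₁ ω * s γ₂ ω * s γ₁ ω * s γ₄ ω
              = (s γ₁ ω * s γ₁ ω) * (s γ₂ ω * s γ₄ ω) := by ring
            _ = _ := by rw [h1, one_mul]
        rw [integral_congr_ae hae]; exact sign_mean2' h24
    · by_cases h14 : γ₁ = γ₄
      · subst h14
        by_cases h23 : γ₂ = γ₃
        · subst h23
          rw [if_pos (Or.inr (Or.inr ⟨rfl, rfl⟩))]
          have hae : ∀ᵐ ω ∂μ, s γ₁ ω * s γ₂ ω * s γ₂ ω * s γ₁ ω = 1 := by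
            filter_upwards [sign_sq' γ₁, sign_sq' γ₂] with ω h1 h2
            calc s γ₁ ω * s γ₂ ω * s γ₂ ω * s γ₁ ω
                = (s γ₁ ω * s γ₁ ω) * (s γ₂ ω * s γ₂ ω) := by ring
              _ = 1 := by rw [h1, h2, one_mul]
          rw [integral_congr_ae hae]; simp
        · rw [if_neg (by rintro (⟨h, h'⟩ | ⟨h, h'⟩ | ⟨h, h'⟩) <;> grind)]
          have hae : ∀ᵐ ω ∂μ, s γ₁ ω * s γ₂ ω * s γ₃ ω * s γ₁ ω = s γ₂ ω * s γ₃ ω := by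
            filter_upwards [sign_sq' γ₁] with ω h1
            calc s γ₁ ω * s γ₂ ω * s γ₃ ω * s γ₁ ω
                = (s γ₁ ω * s γ₁ ω) * (s γ₂ ω * s γ₃ ω) := by ring
              _ = _ := by rw [h1, one_mul]
          rw [integral_congr_ae hae]; exact sign_mean2' h23
      · rw [if_neg (by rintro (⟨h, h'⟩ | ⟨h, h'⟩ | ⟨h, h'⟩) <;> grind)]
        by_cases h23 : γ₂ = γ₃
        · subst h23
          have hae : ∀ᵐ ω ∂μ, s γ₁ ω * s γ₂ ω * s γ₂ ω * s γ₄ ω = s γ₁ ω * s γ₄ ω := by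
            filter_upwards [sign_sq' γ₂] with ω h2
            calc s γ₁ ω * s γ₂ ω * s γ₂ ω * s γ₄ ω
                = (s γ₂ ω * s γ₂ ω) * (s γ₁ ω * s γ₄ ω) := by ring
              _ = _ := by rw [h2, one_mul]
          rw [integral_congr_ae hae]; exact sign_mean2' h14
        · by_cases h24 : γ₂ = γ₄
          · subst h24
            have hae : ∀ᵐ ω ∂μ, s γ₁ ω * s γ₂ ω * s γ₃ ω * s γ₂ ω = s γ₁ ω * s γ₃ ω := by
              filter_upwards [sign_sq' γ₂] with ω h2
              calc s γ₁ ω * s γ₂ ω * s γ₃ ω * s γ₂ ω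
                  = (s γ₂ ω * s γ₂ ω) * (s γ₁ ω * s γ₃ ω) := by ring
                _ = _ := by rw [h2, one_mul]
            rw [integral_congr_ae hae]; exact sign_mean2' h13
          · by_cases h34 : γ₃ = γ₄
            · subst h34
              have hae : ∀ᵐ ω ∂μ, s γ₁ ω * s γ₂ ω * s γ₃ ω * s γ₃ ω = s γ₁ ω * s γ₂ ω := by
                filter_upwards [sign_sq' γ₃] with ω h3
                calc s γ₁ ω * s γ₂ ω * s γ₃ ω * s γ₃ ω
                    = (s γ₃ ω * s γ₃ ω) * (s γ₁ ω * s γ₂ ω) := by ring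
                  _ = _ := by rw [h3, one_mul]
              rw [integral_congr_ae hae]; exact sign_mean2' h12
            · exact sign_mean4' h12 h13 h14 h23 h24 h34

end M2


section A
variable {Ω : Type*} [MeasurableSpace Ω] (μ : Measure Ω) [IsProbabilityMeasure μ]
  {Γ : Type*} [Countable Γ] [DecidableEq Γ] (s : Γ → Ω → ℝ)
  (hsmeas : ∀ γ : Γ, Measurable (s γ))
  (hsabs : ∀ γ : Γ, ∀ᵐ ω ∂μ, |s γ ω| ≤ 1)
  (hm4 : ∀ γ₁ γ₂ γ₃ γ₄ : Γ, ∫ ω, s γ₁ ω * s γ₂ ω * s γ₃ ω * s γ₄ ω ∂μ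
      = if (γ₁ = γ₂ ∧ γ₃ = γ₄) ∨ (γ₁ = γ₃ ∧ γ₂ = γ₄) ∨ (γ₁ = γ₄ ∧ γ₂ = γ₃)
        then (1:ℝ) else 0)
  (counting' : ∀ t₁ t₂ t₃ t₄ : Finset Γ,
    (∑ γ₁ ∈ t₁, ∑ γ₂ ∈ t₂, ∑ γ₃ ∈ t₃, ∑ γ₄ ∈ t₄,
        if (γ₁ = γ₂ ∧ γ₃ = γ₄) ∨ (γ₁ = γ₃ ∧ γ₂ = γ₄) ∨ (γ₁ = γ₄ ∧ γ₂ = γ₃)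
        then (1:ℝ) else 0)
      = ((t₁ ∩ t₂).card : ℝ) * ((t₃ ∩ t₄).card : ℝ)
        + ((t₁ ∩ t₃).card : ℝ) * ((t₂ ∩ t₄).card : ℝ)
        + ((t₁ ∩ t₄).card : ℝ) * ((t₂ ∩ t₃).card : ℝ)
        - 2 * ((t₁ ∩ t₂ ∩ t₃ ∩ t₄).card : ℝ))

include hsmeas hsabs in
lemma prod4_int (a b c d : Γ) :
    Integrable (fun ω => s a ω * s b ω * s c ω * s d ω) μ := by
  refine (integrable_const (1:ℝ)).mono'
    ((((hsmeas a).mul (hsmeas b)).mul (hsmeas c)).mul (hsmeas d)).aestronglyMeasurable ?_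
  filter_upwards [hsabs a, hsabs b, hsabs c, hsabs d] with ω ha hb hc hd
  have h0 : ∀ x : Ω → ℝ, (0:ℝ) ≤ |x ω| := fun x => abs_nonneg _
  rw [Real.norm_eq_abs, abs_mul, abs_mul, abs_mul]
  exact mul_le_one₀ (mul_le_one₀ (mul_le_one₀ ha (h0 _) hb) (h0 _) hc) (h0 _) hd

lemma expand_prod (t₁ t₂ t₃ t₄ : Finset Γ) (ω : Ω) :
    (∑ γ ∈ t₁, s γ ω) * (∑ γ ∈ t₂, s γ ω) * (∑ γ ∈ t₃, s γ ω) * (∑ γ ∈ t₄, s γ ω)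
      = ∑ γ₁ ∈ t₁, ∑ γ₂ ∈ t₂, ∑ γ₃ ∈ t₃, ∑ γ₄ ∈ t₄,
          s γ₁ ω * s γ₂ ω * s γ₃ ω * s γ₄ ω := by
  have h2 : (∑ γ ∈ t₁, s γ ω) * (∑ γ ∈ t₂, s γ ω)
      = ∑ γ₁ ∈ t₁, ∑ γ₂ ∈ t₂, s γ₁ ω * s γ₂ ω := Finset.sum_mul_sum _ _ _ _
  have h3 : (∑ γ ∈ t₁, s γ ω) * (∑ γ ∈ t₂, s γ ω) * (∑ γ ∈ t₃, s γ ω)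
      = ∑ γ₁ ∈ t₁, ∑ γ₂ ∈ t₂, ∑ γ₃ ∈ t₃, s γ₁ ω * s γ₂ ω * s γ₃ ω := by
    rw [h2, Finset.sum_mul]
    refine Finset.sum_congr rfl fun γ₁ _ => ?_
    rw [Finset.sum_mul]
    refine Finset.sum_congr rfl fun γ₂ _ => ?_
    rw [Finset.mul_sum]
  rw [h3, Finset.sum_mul]
  refine Finset.sum_congr rfl fun γ₁ _ => ?_
  rw [Finset.sum_mul]
  refine Finset.sum_congr rfl fun γ₂ _ => ?_
  rw [Finset.sum_mul]
  refine Finset.sum_congr rfl fun γ₃ _ => ?_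
  rw [Finset.mul_sum]

include hsmeas hsabs in
lemma sumprod_int (t₁ t₂ t₃ t₄ : Finset Γ) :
    Integrable (fun ω => (∑ γ ∈ t₁, s γ ω) * (∑ γ ∈ t₂, s γ ω)
      * (∑ γ ∈ t₃, s γ ω) * (∑ γ ∈ t₄, s γ ω)) μ := by
  have : (fun ω => (∑ γ ∈ t₁, s γ ω) * (∑ γ ∈ t₂, s γ ω)
      * (∑ γ ∈ t₃, s γ ω) * (∑ γ ∈ t₄, s γ ω))
      = fun ω => ∑ γ₁ ∈ t₁, ∑ γ₂ ∈ t₂, ∑ γ₃ ∈ t₃, ∑ γ₄ ∈ t₄,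
          s γ₁ ω * s γ₂ ω * s γ₃ ω * s γ₄ ω := funext (expand_prod s t₁ t₂ t₃ t₄)
  rw [this]
  exact integrable_finset_sum _ fun γ₁ _ => integrable_finset_sum _ fun γ₂ _ =>
    integrable_finset_sum _ fun γ₃ _ => integrable_finset_sum _ fun γ₄ _ =>
      prod4_int μ s hsmeas hsabs γ₁ γ₂ γ₃ γ₄

include hsmeas hsabs hm4 counting' in
lemma lemmaA (t₁ t₂ t₃ t₄ : Finset Γ) :
    ∫ ω, (∑ γ ∈ t₁, s γ ω) * (∑ γ ∈ t₂, s γ ω)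
        * (∑ γ ∈ t₃, s γ ω) * (∑ γ ∈ t₄, s γ ω) ∂μ
      = ((t₁ ∩ t₂).card : ℝ) * ((t₃ ∩ t₄).card : ℝ)
        + ((t₁ ∩ t₃).card : ℝ) * ((t₂ ∩ t₄).card : ℝ)
        + ((t₁ ∩ t₄).card : ℝ) * ((t₂ ∩ t₃).card : ℝ)
        - 2 * ((t₁ ∩ t₂ ∩ t₃ ∩ t₄).card : ℝ) := by
  have int4 : ∀ a b c d : Γ, Integrable (fun ω => s a ω * s b ω * s c ω * s d ω) μ :=
    fun a b c d => prod4_int μ s hsmeas hsabs a b c d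
  have int3 : ∀ a b c : Γ, Integrable
      (fun ω => ∑ γ₄ ∈ t₄, s a ω * s b ω * s c ω * s γ₄ ω) μ :=
    fun a b c => integrable_finset_sum _ fun γ₄ _ => int4 a b c γ₄
  have int2 : ∀ a b : Γ, Integrable
      (fun ω => ∑ γ₃ ∈ t₃, ∑ γ₄ ∈ t₄, s a ω * s b ω * s γ₃ ω * s γ₄ ω) μ :=
    fun a b => integrable_finset_sum _ fun γ₃ _ => int3 a b γ₃
  have int1 : ∀ a : Γ, Integrable
      (fun ω => ∑ γ₂ ∈ t₂, ∑ γ₃ ∈ t₃, ∑ γ₄ ∈ t₄, s a ω * s γ₂ ω * s γ₃ ω * s γ₄ ω) μ :=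
    fun a => integrable_finset_sum _ fun γ₂ _ => int2 a γ₂
  calc ∫ ω, (∑ γ ∈ t₁, s γ ω) * (∑ γ ∈ t₂, s γ ω)
        * (∑ γ ∈ t₃, s γ ω) * (∑ γ ∈ t₄, s γ ω) ∂μ
      = ∫ ω, ∑ γ₁ ∈ t₁, ∑ γ₂ ∈ t₂, ∑ γ₃ ∈ t₃, ∑ γ₄ ∈ t₄,
          s γ₁ ω * s γ₂ ω * s γ₃ ω * s γ₄ ω ∂μ := by
        exact integral_congr_ae (Filter.Eventually.of_forall (expand_prod s t₁ t₂ t₃ t₄))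
    _ = ∑ γ₁ ∈ t₁, ∫ ω, ∑ γ₂ ∈ t₂, ∑ γ₃ ∈ t₃, ∑ γ₄ ∈ t₄,
          s γ₁ ω * s γ₂ ω * s γ₃ ω * s γ₄ ω ∂μ :=
        integral_finset_sum _ fun γ₁ _ => int1 γ₁
    _ = ∑ γ₁ ∈ t₁, ∑ γ₂ ∈ t₂, ∫ ω, ∑ γ₃ ∈ t₃, ∑ γ₄ ∈ t₄,
          s γ₁ ω * s γ₂ ω * s γ₃ ω * s γ₄ ω ∂μ :=
        Finset.sum_congr rfl fun γ₁ _ => integral_finset_sum _ fun γ₂ _ => int2 γ₁ γ₂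
    _ = ∑ γ₁ ∈ t₁, ∑ γ₂ ∈ t₂, ∑ γ₃ ∈ t₃, ∫ ω, ∑ γ₄ ∈ t₄,
          s γ₁ ω * s γ₂ ω * s γ₃ ω * s γ₄ ω ∂μ :=
        Finset.sum_congr rfl fun γ₁ _ => Finset.sum_congr rfl fun γ₂ _ =>
          integral_finset_sum _ fun γ₃ _ => int3 γ₁ γ₂ γ₃
    _ = ∑ γ₁ ∈ t₁, ∑ γ₂ ∈ t₂, ∑ γ₃ ∈ t₃, ∑ γ₄ ∈ t₄, ∫ ω,
          s γ₁ ω * s γ₂ ω * s γ₃ ω * s γ₄ ω ∂μ :=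
        Finset.sum_congr rfl fun γ₁ _ => Finset.sum_congr rfl fun γ₂ _ =>
          Finset.sum_congr rfl fun γ₃ _ => integral_finset_sum _ fun γ₄ _ => int4 γ₁ γ₂ γ₃ γ₄
    _ = ∑ γ₁ ∈ t₁, ∑ γ₂ ∈ t₂, ∑ γ₃ ∈ t₃, ∑ γ₄ ∈ t₄,
          (if (γ₁ = γ₂ ∧ γ₃ = γ₄) ∨ (γ₁ = γ₃ ∧ γ₂ = γ₄) ∨ (γ₁ = γ₄ ∧ γ₂ = γ₃)
            then (1:ℝ) else 0) :=
        Finset.sum_congr rfl fun γ₁ _ => Finset.sum_congr rfl fun γ₂ _ =>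
          Finset.sum_congr rfl fun γ₃ _ => Finset.sum_congr rfl fun γ₄ _ => hm4 γ₁ γ₂ γ₃ γ₄
    _ = _ := counting' t₁ t₂ t₃ t₄
end A


lemma abs_mul4_le (a b c d : ℝ) :
    |a * b * c * d| ≤ (a * a * (c * c) + a * a * (d * d) + b * b * (c * c) + b * b * (d * d)) / 4 := by
  have h1 : |a * b| ≤ (a * a + b * b) / 2 :=
    abs_le.2 ⟨by nlinarith [sq_nonneg (a + b)], by nlinarith [sq_nonneg (a - b)]⟩
  have h2 : |c * d| ≤ (c * c + d * d) / 2 :=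
    abs_le.2 ⟨by nlinarith [sq_nonneg (c + d)], by nlinarith [sq_nonneg (c - d)]⟩
  calc |a * b * c * d| = |a * b| * |c * d| := by
        rw [show a * b * c * d = (a * b) * (c * d) by ring, abs_mul]
    _ ≤ ((a * a + b * b) / 2) * ((c * c + d * d) / 2) :=
        mul_le_mul h1 h2 (abs_nonneg _) (by nlinarith [mul_self_nonneg a, mul_self_nonneg b])
    _ = _ := by ring

section Main
variable {Ω : Type*} [MeasurableSpace Ω] (μ : Measure Ω) [IsProbabilityMeasure μ]
  {Γ : Type*} [Countable Γ] [DecidableEq Γ] {X : Type*}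
  (S : X → Ω → Finset Γ) (s : Γ → Ω → ℝ)
  (hSmeas : ∀ x : X, Measurable (S x))
  (hsmeas : ∀ γ : Γ, Measurable (s γ))
  (hsabs : ∀ γ : Γ, ∀ᵐ ω ∂μ, |s γ ω| ≤ 1)
  (hA : ∀ t₁ t₂ t₃ t₄ : Finset Γ,
    ∫ ω, (∑ γ ∈ t₁, s γ ω) * (∑ γ ∈ t₂, s γ ω)
        * (∑ γ ∈ t₃, s γ ω) * (∑ γ ∈ t₄, s γ ω) ∂μ
      = ((t₁ ∩ t₂).card : ℝ) * ((t₃ ∩ t₄).card : ℝ)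
        + ((t₁ ∩ t₃).card : ℝ) * ((t₂ ∩ t₄).card : ℝ)
        + ((t₁ ∩ t₄).card : ℝ) * ((t₂ ∩ t₃).card : ℝ)
        - 2 * ((t₁ ∩ t₂ ∩ t₃ ∩ t₄).card : ℝ))
  (hGi : ∀ t₁ t₂ t₃ t₄ : Finset Γ,
    Integrable (fun ω => (∑ γ ∈ t₁, s γ ω) * (∑ γ ∈ t₂, s γ ω)
      * (∑ γ ∈ t₃, s γ ω) * (∑ γ ∈ t₄, s γ ω)) μ)
  (hSsindep : IndepFun (fun ω (x : X) => S x ω) (fun ω (γ : Γ) => s γ ω) μ)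
  (x₁ x₂ x₃ x₄ : X)
  (h₁ : Integrable (fun ω => ((S x₁ ω).card : ℝ) ^ 2) μ)
  (h₂ : Integrable (fun ω => ((S x₂ ω).card : ℝ) ^ 2) μ)
  (h₃ : Integrable (fun ω => ((S x₃ ω).card : ℝ) ^ 2) μ)
  (h₄ : Integrable (fun ω => ((S x₄ ω).card : ℝ) ^ 2) μ)

include hSmeas hsmeas hsabs hA hGi hSsindep h₁ h₂ h₃ h₄ in
theorem main' :
    Integrable (fun ω => (∑ γ ∈ S x₁ ω, s γ ω) * (∑ γ ∈ S x₂ ω, s γ ω)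
        * (∑ γ ∈ S x₃ ω, s γ ω) * (∑ γ ∈ S x₄ ω, s γ ω)) μ ∧
      ∫ ω, (∑ γ ∈ S x₁ ω, s γ ω) * (∑ γ ∈ S x₂ ω, s γ ω)
          * (∑ γ ∈ S x₃ ω, s γ ω) * (∑ γ ∈ S x₄ ω, s γ ω) ∂μ
        = ∫ ω, (((S x₁ ω ∩ S x₂ ω).card : ℝ) * ((S x₃ ω ∩ S x₄ ω).card : ℝ)
            + ((S x₁ ω ∩ S x₃ ω).card : ℝ) * ((S x₂ ω ∩ S x₄ ω).card : ℝ)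
            + ((S x₁ ω ∩ S x₄ ω).card : ℝ) * ((S x₂ ω ∩ S x₃ ω).card : ℝ)
            - 2 * ((S x₁ ω ∩ S x₂ ω ∩ S x₃ ω ∩ S x₄ ω).card : ℝ)) ∂μ := by
  classical
  -- the tuple map
  set T : Ω → Finset Γ × Finset Γ × Finset Γ × Finset Γ :=
    fun ω => (S x₁ ω, S x₂ ω, S x₃ ω, S x₄ ω) with hTdef
  have hT : Measurable T :=
    (hSmeas x₁).prodMk ((hSmeas x₂).prodMk ((hSmeas x₃).prodMk (hSmeas x₄)))
  set G : (Finset Γ × Finset Γ × Finset Γ × Finset Γ) → Ω → ℝ := fun t ω =>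
    (∑ γ ∈ t.1, s γ ω) * (∑ γ ∈ t.2.1, s γ ω)
      * (∑ γ ∈ t.2.2.1, s γ ω) * (∑ γ ∈ t.2.2.2, s γ ω) with hGdef
  set P : (Finset Γ × Finset Γ × Finset Γ × Finset Γ) → ℝ := fun t =>
    ((t.1 ∩ t.2.1).card : ℝ) * ((t.2.2.1 ∩ t.2.2.2).card : ℝ)
      + ((t.1 ∩ t.2.2.1).card : ℝ) * ((t.2.1 ∩ t.2.2.2).card : ℝ)
      + ((t.1 ∩ t.2.2.2).card : ℝ) * ((t.2.1 ∩ t.2.2.1).card : ℝ)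
      - 2 * ((t.1 ∩ t.2.1 ∩ t.2.2.1 ∩ t.2.2.2).card : ℝ) with hPdef
  set Q : (Finset Γ × Finset Γ × Finset Γ × Finset Γ) → ℝ := fun t =>
    3 * (((t.1.card : ℝ) + (t.2.1.card : ℝ))
        * ((t.2.2.1.card : ℝ) + (t.2.2.2.card : ℝ))) + 2 * (t.1.card : ℝ) with hQdef
  set f : (Finset Γ × Finset Γ × Finset Γ × Finset Γ) → Ω → ℝ := fun t ω =>
    (if T ω = t then (1:ℝ) else 0) * G t ω with hfdef
  -- basic facts
  have hGmeas : ∀ t, Measurable (G t) := by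
    intro t
    exact (((Finset.measurable_sum _ fun γ _ => hsmeas γ).mul
      (Finset.measurable_sum _ fun γ _ => hsmeas γ)).mul
      (Finset.measurable_sum _ fun γ _ => hsmeas γ)).mul
      (Finset.measurable_sum _ fun γ _ => hsmeas γ)
  have hGint : ∀ t, Integrable (G t) μ := fun t => hGi t.1 t.2.1 t.2.2.1 t.2.2.2
  have hQ0 : ∀ t, 0 ≤ Q t := by intro t; rw [hQdef]; positivity
  -- bound on ∫ |G t|
  have hGabsle : ∀ t, ∫ ω, |G t ω| ∂μ ≤ Q t := by
    rintro ⟨t₁, t₂, t₃, t₄⟩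
    have hW : ∀ {u v : Finset Γ}, t₁ ∩ t₁ ∩ u ∩ u = t₁ ∩ u ∧ t₂ ∩ t₂ ∩ u ∩ u = t₂ ∩ u := by
      intro u v
      constructor <;> simp [Finset.inter_assoc, Finset.inter_self]
    have hval : ∀ ta tb : Finset Γ, ∫ ω, (∑ γ ∈ ta, s γ ω) * (∑ γ ∈ ta, s γ ω)
        * (∑ γ ∈ tb, s γ ω) * (∑ γ ∈ tb, s γ ω) ∂μ
        = (ta.card : ℝ) * (tb.card : ℝ) + 2 * ((ta ∩ tb).card : ℝ) * ((ta ∩ tb).card : ℝ)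
          - 2 * ((ta ∩ tb).card : ℝ) := by
      intro ta tb
      have h := hA ta ta tb tb
      have e1 : ta ∩ ta ∩ tb ∩ tb = ta ∩ tb := by
        simp [Finset.inter_assoc, Finset.inter_self]
      rw [e1, Finset.inter_self, Finset.inter_self] at h
      rw [h]; ring
    have hbd : ∀ ta tb : Finset Γ,
        (ta.card : ℝ) * (tb.card : ℝ) + 2 * ((ta ∩ tb).card : ℝ) * ((ta ∩ tb).card : ℝ)
          - 2 * ((ta ∩ tb).card : ℝ) ≤ 3 * ((ta.card : ℝ) * (tb.card : ℝ)) := by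
      intro ta tb
      have hca : ((ta ∩ tb).card : ℝ) ≤ (ta.card : ℝ) :=
        Nat.cast_le.2 (Finset.card_le_card Finset.inter_subset_left)
      have hcb : ((ta ∩ tb).card : ℝ) ≤ (tb.card : ℝ) :=
        Nat.cast_le.2 (Finset.card_le_card Finset.inter_subset_right)
      have hc0 : (0:ℝ) ≤ ((ta ∩ tb).card : ℝ) := Nat.cast_nonneg _
      nlinarith [mul_le_mul hca hcb hc0 (Nat.cast_nonneg _)]
    -- pointwise bound
    have hint13 := hGi t₁ t₁ t₃ t₃
    have hint14 := hGi t₁ t₁ t₄ t₄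
    have hint23 := hGi t₂ t₂ t₃ t₃
    have hint24 := hGi t₂ t₂ t₄ t₄
    have hWint : Integrable (fun ω => ((∑ γ ∈ t₁, s γ ω) * (∑ γ ∈ t₁, s γ ω)
        * (∑ γ ∈ t₃, s γ ω) * (∑ γ ∈ t₃, s γ ω)
        + (∑ γ ∈ t₁, s γ ω) * (∑ γ ∈ t₁, s γ ω) * (∑ γ ∈ t₄, s γ ω) * (∑ γ ∈ t₄, s γ ω)
        + (∑ γ ∈ t₂, s γ ω) * (∑ γ ∈ t₂, s γ ω) * (∑ γ ∈ t₃, s γ ω) * (∑ γ ∈ t₃, s γ ω)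
        + (∑ γ ∈ t₂, s γ ω) * (∑ γ ∈ t₂, s γ ω) * (∑ γ ∈ t₄, s γ ω) * (∑ γ ∈ t₄, s γ ω)) / 4) μ :=
      (((hint13.add hint14).add hint23).add hint24).div_const 4
    have hstep : ∫ ω, |G (t₁, t₂, t₃, t₄) ω| ∂μ
        ≤ ∫ ω, ((∑ γ ∈ t₁, s γ ω) * (∑ γ ∈ t₁, s γ ω)
          * (∑ γ ∈ t₃, s γ ω) * (∑ γ ∈ t₃, s γ ω)
          + (∑ γ ∈ t₁, s γ ω) * (∑ γ ∈ t₁, s γ ω) * (∑ γ ∈ t₄, s γ ω) * (∑ γ ∈ t₄, s γ ω)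
          + (∑ γ ∈ t₂, s γ ω) * (∑ γ ∈ t₂, s γ ω) * (∑ γ ∈ t₃, s γ ω) * (∑ γ ∈ t₃, s γ ω)
          + (∑ γ ∈ t₂, s γ ω) * (∑ γ ∈ t₂, s γ ω) * (∑ γ ∈ t₄, s γ ω) * (∑ γ ∈ t₄, s γ ω)) / 4 ∂μ := by
      refine integral_mono (hGint (t₁, t₂, t₃, t₄)).abs hWint fun ω => ?_
      have := abs_mul4_le (∑ γ ∈ t₁, s γ ω) (∑ γ ∈ t₂, s γ ω)
        (∑ γ ∈ t₃, s γ ω) (∑ γ ∈ t₄, s γ ω)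
      simp only [hGdef]
      calc |(∑ γ ∈ t₁, s γ ω) * (∑ γ ∈ t₂, s γ ω)
          * (∑ γ ∈ t₃, s γ ω) * (∑ γ ∈ t₄, s γ ω)| ≤ _ := this
        _ ≤ _ := by apply le_of_eq; ring
    have hsplit : ∫ ω, ((∑ γ ∈ t₁, s γ ω) * (∑ γ ∈ t₁, s γ ω)
          * (∑ γ ∈ t₃, s γ ω) * (∑ γ ∈ t₃, s γ ω)
          + (∑ γ ∈ t₁, s γ ω) * (∑ γ ∈ t₁, s γ ω) * (∑ γ ∈ t₄, s γ ω) * (∑ γ ∈ t₄, s γ ω)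
          + (∑ γ ∈ t₂, s γ ω) * (∑ γ ∈ t₂, s γ ω) * (∑ γ ∈ t₃, s γ ω) * (∑ γ ∈ t₃, s γ ω)
          + (∑ γ ∈ t₂, s γ ω) * (∑ γ ∈ t₂, s γ ω) * (∑ γ ∈ t₄, s γ ω) * (∑ γ ∈ t₄, s γ ω)) / 4 ∂μ
        = ((∫ ω, (∑ γ ∈ t₁, s γ ω) * (∑ γ ∈ t₁, s γ ω)
            * (∑ γ ∈ t₃, s γ ω) * (∑ γ ∈ t₃, s γ ω) ∂μ)
          + (∫ ω, (∑ γ ∈ t₁, s γ ω) * (∑ γ ∈ t₁, s γ ω)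
            * (∑ γ ∈ t₄, s γ ω) * (∑ γ ∈ t₄, s γ ω) ∂μ)
          + (∫ ω, (∑ γ ∈ t₂, s γ ω) * (∑ γ ∈ t₂, s γ ω)
            * (∑ γ ∈ t₃, s γ ω) * (∑ γ ∈ t₃, s γ ω) ∂μ)
          + (∫ ω, (∑ γ ∈ t₂, s γ ω) * (∑ γ ∈ t₂, s γ ω)
            * (∑ γ ∈ t₄, s γ ω) * (∑ γ ∈ t₄, s γ ω) ∂μ)) / 4 := by
      have i12 : Integrable (fun ω => (∑ γ ∈ t₁, s γ ω) * (∑ γ ∈ t₁, s γ ω)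
          * (∑ γ ∈ t₃, s γ ω) * (∑ γ ∈ t₃, s γ ω)
          + (∑ γ ∈ t₁, s γ ω) * (∑ γ ∈ t₁, s γ ω)
          * (∑ γ ∈ t₄, s γ ω) * (∑ γ ∈ t₄, s γ ω)) μ := hint13.add hint14
      have i123 : Integrable (fun ω => (∑ γ ∈ t₁, s γ ω) * (∑ γ ∈ t₁, s γ ω)
          * (∑ γ ∈ t₃, s γ ω) * (∑ γ ∈ t₃, s γ ω)
          + (∑ γ ∈ t₁, s γ ω) * (∑ γ ∈ t₁, s γ ω)
          * (∑ γ ∈ t₄, s γ ω) * (∑ γ ∈ t₄, s γ ω)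
          + (∑ γ ∈ t₂, s γ ω) * (∑ γ ∈ t₂, s γ ω)
          * (∑ γ ∈ t₃, s γ ω) * (∑ γ ∈ t₃, s γ ω)) μ := i12.add hint23
      rw [integral_div, integral_add i123 hint24, integral_add i12 hint23,
        integral_add hint13 hint14]
    have hcards : ∀ ta tb : Finset Γ, ∫ ω, (∑ γ ∈ ta, s γ ω) * (∑ γ ∈ ta, s γ ω)
        * (∑ γ ∈ tb, s γ ω) * (∑ γ ∈ tb, s γ ω) ∂μ ≤ 3 * ((ta.card : ℝ) * (tb.card : ℝ)) :=
      fun ta tb => (hval ta tb).le.trans (hbd ta tb)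
    have hfin : ∫ ω, |G (t₁, t₂, t₃, t₄) ω| ∂μ
        ≤ (3 * ((t₁.card : ℝ) * (t₃.card : ℝ)) + 3 * ((t₁.card : ℝ) * (t₄.card : ℝ))
          + 3 * ((t₂.card : ℝ) * (t₃.card : ℝ)) + 3 * ((t₂.card : ℝ) * (t₄.card : ℝ))) / 4 := by
      refine (hstep.trans_eq hsplit).trans ?_
      have := hcards t₁ t₃
      have := hcards t₁ t₄
      have := hcards t₂ t₃
      have := hcards t₂ t₄
      linarith
    refine hfin.trans ?_
    simp only [hQdef]
    have c1 : (0:ℝ) ≤ (t₁.card : ℝ) := Nat.cast_nonneg _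
    have c2 : (0:ℝ) ≤ (t₂.card : ℝ) := Nat.cast_nonneg _
    have c3 : (0:ℝ) ≤ (t₃.card : ℝ) := Nat.cast_nonneg _
    have c4 : (0:ℝ) ≤ (t₄.card : ℝ) := Nat.cast_nonneg _
    nlinarith [mul_nonneg c1 c3, mul_nonneg c1 c4, mul_nonneg c2 c3, mul_nonneg c2 c4]
  -- |P t| ≤ Q t
  have hPQ : ∀ t, |P t| ≤ Q t := by
    rintro ⟨t₁, t₂, t₃, t₄⟩
    simp only [hPdef, hQdef]
    have cle : ∀ {u v : Finset Γ}, ((u ∩ v).card : ℝ) ≤ (u.card : ℝ) :=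
      fun {u v} => Nat.cast_le.2 (Finset.card_le_card Finset.inter_subset_left)
    have cler : ∀ {u v : Finset Γ}, ((u ∩ v).card : ℝ) ≤ (v.card : ℝ) :=
      fun {u v} => Nat.cast_le.2 (Finset.card_le_card Finset.inter_subset_right)
    have cnn : ∀ {u v : Finset Γ}, (0:ℝ) ≤ ((u ∩ v).card : ℝ) := fun {u v} => Nat.cast_nonneg _
    have h1234 : ((t₁ ∩ t₂ ∩ t₃ ∩ t₄).card : ℝ) ≤ (t₁.card : ℝ) := by
      refine Nat.cast_le.2 (Finset.card_le_card ?_)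
      exact (Finset.inter_subset_left).trans ((Finset.inter_subset_left).trans
        Finset.inter_subset_left)
    have c1 : (0:ℝ) ≤ (t₁.card : ℝ) := Nat.cast_nonneg _
    have c2 : (0:ℝ) ≤ (t₂.card : ℝ) := Nat.cast_nonneg _
    have c3 : (0:ℝ) ≤ (t₃.card : ℝ) := Nat.cast_nonneg _
    have c4 : (0:ℝ) ≤ (t₄.card : ℝ) := Nat.cast_nonneg _
    have p12 : ((t₁ ∩ t₂).card : ℝ) * ((t₃ ∩ t₄).card : ℝ) ≤ (t₁.card : ℝ) * (t₃.card : ℝ) :=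
      mul_le_mul cle cle cnn c1
    have p13 : ((t₁ ∩ t₃).card : ℝ) * ((t₂ ∩ t₄).card : ℝ) ≤ (t₁.card : ℝ) * (t₄.card : ℝ) :=
      mul_le_mul cle cler cnn c1
    have p14 : ((t₁ ∩ t₄).card : ℝ) * ((t₂ ∩ t₃).card : ℝ) ≤ (t₁.card : ℝ) * (t₃.card : ℝ) :=
      mul_le_mul cle cler cnn c1
    have q12 : (0:ℝ) ≤ ((t₁ ∩ t₂).card : ℝ) * ((t₃ ∩ t₄).card : ℝ) := mul_nonneg cnn cnn
    have q13 : (0:ℝ) ≤ ((t₁ ∩ t₃).card : ℝ) * ((t₂ ∩ t₄).card : ℝ) := mul_nonneg cnn cnn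
    have q14 : (0:ℝ) ≤ ((t₁ ∩ t₄).card : ℝ) * ((t₂ ∩ t₃).card : ℝ) := mul_nonneg cnn cnn
    have h12340 : (0:ℝ) ≤ ((t₁ ∩ t₂ ∩ t₃ ∩ t₄).card : ℝ) := Nat.cast_nonneg _
    rw [abs_le]
    constructor <;> nlinarith [mul_nonneg c1 c3, mul_nonneg c1 c4, mul_nonneg c2 c3,
      mul_nonneg c2 c4]
  -- integrable dominating function
  have hDint : Integrable (fun ω => 4 * (((S x₁ ω).card : ℝ)^2 + ((S x₂ ω).card : ℝ)^2
      + ((S x₃ ω).card : ℝ)^2 + ((S x₄ ω).card : ℝ)^2) + 1) μ := by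
    apply Integrable.add _ (integrable_const 1)
    exact (((h₁.add h₂).add h₃).add h₄).const_mul 4
  have hQTle : ∀ ω, Q (T ω) ≤ 4 * (((S x₁ ω).card : ℝ)^2 + ((S x₂ ω).card : ℝ)^2
      + ((S x₃ ω).card : ℝ)^2 + ((S x₄ ω).card : ℝ)^2) + 1 := by
    intro ω
    rw [hQdef, hTdef]
    have c1 : (0:ℝ) ≤ ((S x₁ ω).card : ℝ) := Nat.cast_nonneg _
    have c2 : (0:ℝ) ≤ ((S x₂ ω).card : ℝ) := Nat.cast_nonneg _
    have c3 : (0:ℝ) ≤ ((S x₃ ω).card : ℝ) := Nat.cast_nonneg _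
    have c4 : (0:ℝ) ≤ ((S x₄ ω).card : ℝ) := Nat.cast_nonneg _
    simp only []
    nlinarith [sq_nonneg (((S x₁ ω).card : ℝ) + ((S x₂ ω).card : ℝ)
      - ((S x₃ ω).card : ℝ) - ((S x₄ ω).card : ℝ)), sq_nonneg (((S x₁ ω).card : ℝ) - 1),
      sq_nonneg (((S x₁ ω).card : ℝ) - ((S x₂ ω).card : ℝ)),
      sq_nonneg (((S x₃ ω).card : ℝ) - ((S x₄ ω).card : ℝ)),
      mul_nonneg c1 c2, mul_nonneg c3 c4, mul_nonneg c1 c3, mul_nonneg c2 c4]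
  have hQTint : Integrable (fun ω => Q (T ω)) μ := by
    refine hDint.mono' ?_ ?_
    · exact (Measurable.aestronglyMeasurable (by
        exact measurable_of_countable Q |>.comp hT))
    · refine Filter.Eventually.of_forall fun ω => ?_
      rw [Real.norm_eq_abs, abs_of_nonneg (hQ0 _)]
      exact hQTle ω
  -- measurability of f t, F
  have hfmeas : ∀ t, Measurable (f t) := by
    intro t
    refine Measurable.mul ?_ (hGmeas t)
    exact (measurable_of_countable (fun k => if k = t then (1:ℝ) else 0)).comp hT
  have hfint : ∀ t, Integrable (f t) μ := by
    intro t
    refine ((hGint t).norm).mono' (hfmeas t).aestronglyMeasurable ?_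
    refine Filter.Eventually.of_forall fun ω => ?_
    rw [hfdef]
    simp only [Real.norm_eq_abs, abs_mul]
    by_cases h : T ω = t <;> simp [h, abs_nonneg]
  -- independence computations
  have hφmeas : ∀ t : Finset Γ × Finset Γ × Finset Γ × Finset Γ,
      Measurable (fun a : X → Finset Γ => if (a x₁, a x₂, a x₃, a x₄) = t then (1:ℝ) else 0) := by
    intro t
    have hmap : Measurable (fun a : X → Finset Γ => (a x₁, a x₂, a x₃, a x₄)) :=
      (measurable_pi_apply x₁).prodMk ((measurable_pi_apply x₂).prodMk
        ((measurable_pi_apply x₃).prodMk (measurable_pi_apply x₄)))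
    exact (measurable_of_countable (fun k => if k = t then (1:ℝ) else 0)).comp hmap
  have hψmeas : ∀ t : Finset Γ × Finset Γ × Finset Γ × Finset Γ,
      Measurable (fun b : Γ → ℝ => (∑ γ ∈ t.1, b γ) * (∑ γ ∈ t.2.1, b γ)
        * (∑ γ ∈ t.2.2.1, b γ) * (∑ γ ∈ t.2.2.2, b γ)) := by
    intro t
    exact (((Finset.measurable_sum _ fun γ _ => measurable_pi_apply γ).mul
      (Finset.measurable_sum _ fun γ _ => measurable_pi_apply γ)).mul
      (Finset.measurable_sum _ fun γ _ => measurable_pi_apply γ)).mul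
      (Finset.measurable_sum _ fun γ _ => measurable_pi_apply γ)
  have hindic : ∀ t : Finset Γ × Finset Γ × Finset Γ × Finset Γ,
      ∫ ω, (if T ω = t then (1:ℝ) else 0) ∂μ = (μ (T ⁻¹' {t})).toReal := by
    intro t
    have : (fun ω => if T ω = t then (1:ℝ) else 0)
        = (T ⁻¹' {t}).indicator (fun _ => (1:ℝ)) := by
      funext ω
      rw [Set.indicator_apply]
      simp [Set.mem_preimage]
    rw [this, integral_indicator_const (1:ℝ) (hT (measurableSet_singleton t))]
    simp [measureReal_def]
  have hkey : ∀ t, ∫ ω, f t ω ∂μ = (μ (T ⁻¹' {t})).toReal * P t := by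
    intro t
    have hind := hSsindep.comp (hφmeas t) (hψmeas t)
    have heq : f t = ((fun a : X → Finset Γ => if (a x₁, a x₂, a x₃, a x₄) = t then (1:ℝ) else 0)
          ∘ (fun ω (x : X) => S x ω))
        * ((fun b : Γ → ℝ => (∑ γ ∈ t.1, b γ) * (∑ γ ∈ t.2.1, b γ)
            * (∑ γ ∈ t.2.2.1, b γ) * (∑ γ ∈ t.2.2.2, b γ)) ∘ (fun ω (γ : Γ) => s γ ω)) := rfl
    calc ∫ ω, f t ω ∂μ
        = ∫ ω, (((fun a : X → Finset Γ => if (a x₁, a x₂, a x₃, a x₄) = t then (1:ℝ) else 0)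
            ∘ (fun ω (x : X) => S x ω))
          * ((fun b : Γ → ℝ => (∑ γ ∈ t.1, b γ) * (∑ γ ∈ t.2.1, b γ)
            * (∑ γ ∈ t.2.2.1, b γ) * (∑ γ ∈ t.2.2.2, b γ)) ∘ (fun ω (γ : Γ) => s γ ω))) ω ∂μ := by
          rw [heq]
      _ = (∫ ω, ((fun a : X → Finset Γ => if (a x₁, a x₂, a x₃, a x₄) = t then (1:ℝ) else 0)
            ∘ (fun ω (x : X) => S x ω)) ω ∂μ)
          * ∫ ω, ((fun b : Γ → ℝ => (∑ γ ∈ t.1, b γ) * (∑ γ ∈ t.2.1, b γ)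
            * (∑ γ ∈ t.2.2.1, b γ) * (∑ γ ∈ t.2.2.2, b γ)) ∘ (fun ω (γ : Γ) => s γ ω)) ω ∂μ :=
          hind.integral_mul_eq_mul_integral ((hφmeas t).comp (measurable_pi_lambda _ fun x =>
              hSmeas x)).aestronglyMeasurable
            ((hψmeas t).comp (measurable_pi_lambda _ fun γ =>
              hsmeas γ)).aestronglyMeasurable
      _ = (μ (T ⁻¹' {t})).toReal * P t := by
          rw [show (∫ ω, ((fun a : X → Finset Γ => if (a x₁, a x₂, a x₃, a x₄) = t
              then (1:ℝ) else 0) ∘ (fun ω (x : X) => S x ω)) ω ∂μ)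
              = ∫ ω, (if T ω = t then (1:ℝ) else 0) ∂μ from rfl, hindic t]
          congr 1
          rw [show (∫ ω, ((fun b : Γ → ℝ => (∑ γ ∈ t.1, b γ) * (∑ γ ∈ t.2.1, b γ)
              * (∑ γ ∈ t.2.2.1, b γ) * (∑ γ ∈ t.2.2.2, b γ)) ∘ (fun ω (γ : Γ) => s γ ω)) ω ∂μ)
              = ∫ ω, (∑ γ ∈ t.1, s γ ω) * (∑ γ ∈ t.2.1, s γ ω)
                * (∑ γ ∈ t.2.2.1, s γ ω) * (∑ γ ∈ t.2.2.2, s γ ω) ∂μ from rfl,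
            hA t.1 t.2.1 t.2.2.1 t.2.2.2, hPdef]
  have hkeyabs : ∀ t, ∫ ω, |f t ω| ∂μ = (μ (T ⁻¹' {t})).toReal * ∫ ω, |G t ω| ∂μ := by
    intro t
    have hind := hSsindep.comp (hφmeas t) ((hψmeas t).abs)
    have heq : (fun ω => |f t ω|)
        = ((fun a : X → Finset Γ => if (a x₁, a x₂, a x₃, a x₄) = t then (1:ℝ) else 0)
            ∘ (fun ω (x : X) => S x ω))
          * ((fun b : Γ → ℝ => |(∑ γ ∈ t.1, b γ) * (∑ γ ∈ t.2.1, b γ)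
            * (∑ γ ∈ t.2.2.1, b γ) * (∑ γ ∈ t.2.2.2, b γ)|) ∘ (fun ω (γ : Γ) => s γ ω)) := by
      funext ω
      show |f t ω| = (if T ω = t then (1:ℝ) else 0) * |G t ω|
      rw [hfdef]
      simp only []
      rw [abs_mul]
      by_cases h : T ω = t <;> simp [h]
    calc ∫ ω, |f t ω| ∂μ
        = ∫ ω, (((fun a : X → Finset Γ => if (a x₁, a x₂, a x₃, a x₄) = t then (1:ℝ) else 0)
            ∘ (fun ω (x : X) => S x ω))
          * ((fun b : Γ → ℝ => |(∑ γ ∈ t.1, b γ) * (∑ γ ∈ t.2.1, b γ)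
            * (∑ γ ∈ t.2.2.1, b γ) * (∑ γ ∈ t.2.2.2, b γ)|)
              ∘ (fun ω (γ : Γ) => s γ ω))) ω ∂μ := by rw [← heq]
      _ = (∫ ω, ((fun a : X → Finset Γ => if (a x₁, a x₂, a x₃, a x₄) = t then (1:ℝ) else 0)
            ∘ (fun ω (x : X) => S x ω)) ω ∂μ)
          * ∫ ω, ((fun b : Γ → ℝ => |(∑ γ ∈ t.1, b γ) * (∑ γ ∈ t.2.1, b γ)
            * (∑ γ ∈ t.2.2.1, b γ) * (∑ γ ∈ t.2.2.2, b γ)|)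
              ∘ (fun ω (γ : Γ) => s γ ω)) ω ∂μ :=
          hind.integral_mul_eq_mul_integral ((hφmeas t).comp (measurable_pi_lambda _ fun x =>
              hSmeas x)).aestronglyMeasurable
            (((hψmeas t).abs).comp (measurable_pi_lambda _ fun γ =>
              hsmeas γ)).aestronglyMeasurable
      _ = (μ (T ⁻¹' {t})).toReal * ∫ ω, |G t ω| ∂μ := by
          rw [show (∫ ω, ((fun a : X → Finset Γ => if (a x₁, a x₂, a x₃, a x₄) = t
              then (1:ℝ) else 0) ∘ (fun ω (x : X) => S x ω)) ω ∂μ)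
              = ∫ ω, (if T ω = t then (1:ℝ) else 0) ∂μ from rfl, hindic t]
          rfl
  -- summability
  have hsummable : (∑' t, ∫⁻ ω, ‖f t ω‖ₑ ∂μ) ≠ ⊤ := by
    have per : ∀ t, ∫⁻ ω, ‖f t ω‖ₑ ∂μ ≤ μ (T ⁻¹' {t}) * ENNReal.ofReal (Q t) := by
      intro t
      have h1 : ENNReal.ofReal (∫ ω, ‖f t ω‖ ∂μ) = ∫⁻ ω, ‖f t ω‖ₑ ∂μ :=
        ofReal_integral_norm_eq_lintegral_enorm (hfint t)
      rw [← h1]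
      have h2 : ∫ ω, ‖f t ω‖ ∂μ = (μ (T ⁻¹' {t})).toReal * ∫ ω, |G t ω| ∂μ := by
        simpa only [Real.norm_eq_abs] using hkeyabs t
      rw [h2]
      calc ENNReal.ofReal ((μ (T ⁻¹' {t})).toReal * ∫ ω, |G t ω| ∂μ)
          ≤ ENNReal.ofReal ((μ (T ⁻¹' {t})).toReal * Q t) :=
            ENNReal.ofReal_le_ofReal
              (mul_le_mul_of_nonneg_left (hGabsle t) ENNReal.toReal_nonneg)
        _ = μ (T ⁻¹' {t}) * ENNReal.ofReal (Q t) := by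
            rw [ENNReal.ofReal_mul ENNReal.toReal_nonneg,
              ENNReal.ofReal_toReal (measure_ne_top μ _)]
    have hlt : (∑' t, ∫⁻ ω, ‖f t ω‖ₑ ∂μ) < ⊤ := by
      calc (∑' t, ∫⁻ ω, ‖f t ω‖ₑ ∂μ)
          ≤ ∑' t, μ (T ⁻¹' {t}) * ENNReal.ofReal (Q t) := ENNReal.tsum_le_tsum per
        _ = ∑' t, ENNReal.ofReal (Q t) * (μ.map T) {t} := by
            refine tsum_congr fun t => ?_
            rw [Measure.map_apply hT (measurableSet_singleton t), mul_comm]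
        _ = ∫⁻ t', ENNReal.ofReal (Q t') ∂(μ.map T) := (lintegral_countable' _).symm
        _ = ∫⁻ ω, ENNReal.ofReal (Q (T ω)) ∂μ :=
            lintegral_map (measurable_of_countable _) hT
        _ ≤ ∫⁻ ω, ‖Q (T ω)‖ₑ ∂μ := lintegral_mono fun ω => Real.ofReal_le_enorm _
        _ < ⊤ := hQTint.2
    exact hlt.ne
  -- pointwise decomposition
  have hpt : ∀ ω, (∑ γ ∈ S x₁ ω, s γ ω) * (∑ γ ∈ S x₂ ω, s γ ω)
      * (∑ γ ∈ S x₃ ω, s γ ω) * (∑ γ ∈ S x₄ ω, s γ ω) = ∑' t, f t ω := by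
    intro ω
    rw [eq_comm]
    rw [tsum_eq_single (T ω) (fun t' ht' => by
      simp only [hfdef]
      rw [if_neg (fun h => ht' h.symm), zero_mul])]
    simp [hfdef, hGdef, hTdef]
  -- Integrability of the product
  have hFmeas : Measurable (fun ω => (∑ γ ∈ S x₁ ω, s γ ω) * (∑ γ ∈ S x₂ ω, s γ ω)
      * (∑ γ ∈ S x₃ ω, s γ ω) * (∑ γ ∈ S x₄ ω, s γ ω)) := by
    have hx : ∀ x : X, Measurable (fun ω => ∑ γ ∈ S x ω, s γ ω) := by
      intro x
      have h1 : Measurable (fun p : Ω × Finset Γ => ∑ γ ∈ p.2, s γ p.1) :=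
        measurable_from_prod_countable_left fun t => Finset.measurable_sum _ fun γ _ => hsmeas γ
      exact h1.comp (measurable_id.prodMk (hSmeas x))
    exact (((hx x₁).mul (hx x₂)).mul (hx x₃)).mul (hx x₄)
  have hFint : Integrable (fun ω => (∑ γ ∈ S x₁ ω, s γ ω) * (∑ γ ∈ S x₂ ω, s γ ω)
      * (∑ γ ∈ S x₃ ω, s γ ω) * (∑ γ ∈ S x₄ ω, s γ ω)) μ := by
    refine ⟨hFmeas.aestronglyMeasurable, ?_⟩
    rw [HasFiniteIntegral]
    calc ∫⁻ ω, ‖(∑ γ ∈ S x₁ ω, s γ ω) * (∑ γ ∈ S x₂ ω, s γ ω)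
          * (∑ γ ∈ S x₃ ω, s γ ω) * (∑ γ ∈ S x₄ ω, s γ ω)‖ₑ ∂μ
        ≤ ∫⁻ ω, ∑' t, ‖f t ω‖ₑ ∂μ := by
          refine lintegral_mono fun ω => ?_
          have : (∑ γ ∈ S x₁ ω, s γ ω) * (∑ γ ∈ S x₂ ω, s γ ω)
              * (∑ γ ∈ S x₃ ω, s γ ω) * (∑ γ ∈ S x₄ ω, s γ ω) = f (T ω) ω := by
            simp [hfdef, hGdef, hTdef]
          rw [this]
          exact ENNReal.le_tsum (T ω)
      _ = ∑' t, ∫⁻ ω, ‖f t ω‖ₑ ∂μ :=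
          lintegral_tsum fun t => ((hfmeas t).enorm).aemeasurable
      _ < ⊤ := hsummable.lt_top
  refine ⟨hFint, ?_⟩
  -- compute LHS integral
  have hLHS : ∫ ω, (∑ γ ∈ S x₁ ω, s γ ω) * (∑ γ ∈ S x₂ ω, s γ ω)
      * (∑ γ ∈ S x₃ ω, s γ ω) * (∑ γ ∈ S x₄ ω, s γ ω) ∂μ
      = ∑' t, (μ (T ⁻¹' {t})).toReal * P t := by
    rw [integral_congr_ae (Filter.Eventually.of_forall hpt),
      integral_tsum (fun t => (hfmeas t).aestronglyMeasurable) hsummable]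
    exact tsum_congr hkey
  -- compute RHS integral
  have hRHS : ∫ ω, (((S x₁ ω ∩ S x₂ ω).card : ℝ) * ((S x₃ ω ∩ S x₄ ω).card : ℝ)
            + ((S x₁ ω ∩ S x₃ ω).card : ℝ) * ((S x₂ ω ∩ S x₄ ω).card : ℝ)
            + ((S x₁ ω ∩ S x₄ ω).card : ℝ) * ((S x₂ ω ∩ S x₃ ω).card : ℝ)
            - 2 * ((S x₁ ω ∩ S x₂ ω ∩ S x₃ ω ∩ S x₄ ω).card : ℝ)) ∂μ
      = ∑' t, (μ (T ⁻¹' {t})).toReal * P t := by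
    have hPTint : Integrable (fun ω => P (T ω)) μ := by
      refine hQTint.mono' ((measurable_of_countable P).comp hT).aestronglyMeasurable ?_
      exact Filter.Eventually.of_forall fun ω => by
        rw [Real.norm_eq_abs]; exact hPQ (T ω)
    have hmapint : Integrable P (μ.map T) :=
      (integrable_map_measure (measurable_of_countable P).aestronglyMeasurable
        hT.aemeasurable).2 hPTint
    calc ∫ ω, (((S x₁ ω ∩ S x₂ ω).card : ℝ) * ((S x₃ ω ∩ S x₄ ω).card : ℝ)
            + ((S x₁ ω ∩ S x₃ ω).card : ℝ) * ((S x₂ ω ∩ S x₄ ω).card : ℝ)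
            + ((S x₁ ω ∩ S x₄ ω).card : ℝ) * ((S x₂ ω ∩ S x₃ ω).card : ℝ)
            - 2 * ((S x₁ ω ∩ S x₂ ω ∩ S x₃ ω ∩ S x₄ ω).card : ℝ)) ∂μ
        = ∫ ω, P (T ω) ∂μ := rfl
      _ = ∫ t', P t' ∂(μ.map T) :=
          (integral_map hT.aemeasurable
            (measurable_of_countable P).aestronglyMeasurable).symm
      _ = ∑' t, ((μ.map T) {t}).toReal • P t := integral_countable' hmapint
      _ = ∑' t, (μ (T ⁻¹' {t})).toReal * P t := by
          refine tsum_congr fun t => ?_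
          rw [Measure.map_apply hT (measurableSet_singleton t), smul_eq_mul]
  rw [hLHS, hRHS]
end Main


/-- In the loop-sign model, if `E[N(x_i)²] < ∞` for `i = 1,…,4`, then the
product `h(x₁)h(x₂)h(x₃)h(x₄)` is integrable and
`E[h(x₁)h(x₂)h(x₃)h(x₄)] = E[N(x₁,x₂)N(x₃,x₄) + N(x₁,x₃)N(x₂,x₄) + N(x₁,x₄)N(x₂,x₃)
  − 2 N(x₁,x₂,x₃,x₄)]`. -/
theorem loopSign_fourPoint
    {Ω : Type*} [MeasurableSpace Ω] (μ : Measure Ω) [IsProbabilityMeasure μ]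
    {Γ : Type*} [Countable Γ] [DecidableEq Γ] {X : Type*}
    (S : X → Ω → Finset Γ) (s : Γ → Ω → ℝ)
    (hSmeas : ∀ x : X, Measurable (S x))
    (hsmeas : ∀ γ : Γ, Measurable (s γ))
    (hsign : ∀ γ : Γ, μ {ω | s γ ω = 1} = 1/2 ∧ μ {ω | s γ ω = -1} = 1/2)
    (hsindep : iIndepFun s μ)
    (hSsindep : IndepFun (fun ω (x : X) => S x ω) (fun ω (γ : Γ) => s γ ω) μ)
    (x₁ x₂ x₃ x₄ : X)
    (h₁ : Integrable (fun ω => ((S x₁ ω).card : ℝ) ^ 2) μ)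
    (h₂ : Integrable (fun ω => ((S x₂ ω).card : ℝ) ^ 2) μ)
    (h₃ : Integrable (fun ω => ((S x₃ ω).card : ℝ) ^ 2) μ)
    (h₄ : Integrable (fun ω => ((S x₄ ω).card : ℝ) ^ 2) μ) :
    Integrable (fun ω => (∑ γ ∈ S x₁ ω, s γ ω) * (∑ γ ∈ S x₂ ω, s γ ω)
        * (∑ γ ∈ S x₃ ω, s γ ω) * (∑ γ ∈ S x₄ ω, s γ ω)) μ ∧
      ∫ ω, (∑ γ ∈ S x₁ ω, s γ ω) * (∑ γ ∈ S x₂ ω, s γ ω)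
          * (∑ γ ∈ S x₃ ω, s γ ω) * (∑ γ ∈ S x₄ ω, s γ ω) ∂μ
        = ∫ ω, (((S x₁ ω ∩ S x₂ ω).card : ℝ) * ((S x₃ ω ∩ S x₄ ω).card : ℝ)
            + ((S x₁ ω ∩ S x₃ ω).card : ℝ) * ((S x₂ ω ∩ S x₄ ω).card : ℝ)
            + ((S x₁ ω ∩ S x₄ ω).card : ℝ) * ((S x₂ ω ∩ S x₃ ω).card : ℝ)
            - 2 * ((S x₁ ω ∩ S x₂ ω ∩ S x₃ ω ∩ S x₄ ω).card : ℝ)) ∂μ := by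
  have hsabs := sign_abs μ s hsmeas hsign
  have hm4 := fourMoment μ s (sign_sq μ s hsmeas hsign)
    (fun {γ γ'} h => sign_mean2 μ s hsmeas hsign hsindep h)
    (fun {a b c d} h1 h2 h3 h4 h5 h6 =>
      sign_mean4 μ s hsmeas hsign hsindep h1 h2 h3 h4 h5 h6)
  exact main' μ S s hSmeas hsmeas hsabs
    (lemmaA μ s hsmeas hsabs hm4 (fun t₁ t₂ t₃ t₄ => counting t₁ t₂ t₃ t₄))
    (sumprod_int μ s hsmeas hsabs) hSsindep x₁ x₂ x₃ x₄ h₁ h₂ h₃ h₄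
end
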